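/- arXiv:1609.06066 — 6 statements merged into one kernel-verified Lean document; each statement's English description precedes it below -/
import Mathlib

section
/- Let K ⊆ L ⊆ M be complete discretely valued fields with M/L and L/K finite, separable, totally ramified extensions (with the same perfect residue field). Then ρ_{L/K} ≤ ρ_{M/K} ≤ ρ_{L/K} + ⌈ρ_{M/L} / e_{L/K}⌉. -/
attribute [local instance] FractionRing.liftAlgebra

/-- The quantity `ρ = ⌈(d+1)/e⌉ - 1` associated to a totally ramified extension with
different exponent `d` and ramification index `e`. -/
noncomputable def rhoOf (d e : ℕ) : ℤ := ⌈((d : ℚ) + 1) / (e : ℚ)⌉ - 1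


open IsLocalRing nonZeroDivisors FractionalIdeal in
private lemma rho_arith (d1 d2 e1 e2 : ℕ) (he1 : 0 < e1) (he2 : 0 < e2)
    (hd2 : e2 ≤ d2 + 1) :
    rhoOf d1 e1 ≤ rhoOf (e2 * d1 + d2) (e1 * e2) ∧
      rhoOf (e2 * d1 + d2) (e1 * e2) ≤ rhoOf d1 e1 + ⌈((rhoOf d2 e2 : ℚ)) / (e1 : ℚ)⌉ := by
  have he1' : (0:ℚ) < e1 := by exact_mod_cast he1
  have he2' : (0:ℚ) < e2 := by exact_mod_cast he2
  have he12 : (0:ℚ) < ((e1*e2 : ℕ):ℚ) := by push_cast; positivity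
  have hd2' : (e2:ℚ) ≤ (d2:ℚ) + 1 := by exact_mod_cast hd2
  constructor
  · have h : ((d1:ℚ) + 1) / e1 ≤ (((e2*d1+d2 : ℕ):ℚ) + 1) / ((e1*e2 : ℕ):ℚ) := by
      rw [div_le_div_iff₀ he1' he12]
      push_cast
      nlinarith
    exact sub_le_sub_right (Int.ceil_le_ceil h) 1
  · set ρ2 : ℤ := rhoOf d2 e2 with hρ2
    have h1 : ((d2:ℚ)+1)/e2 ≤ (ρ2:ℚ) + 1 := by
      have := Int.le_ceil (((d2:ℚ)+1)/(e2:ℚ))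
      rw [hρ2]; unfold rhoOf; push_cast; linarith
    have h1' : (d2:ℚ) + 1 ≤ ((ρ2:ℚ)+1) * e2 := by
      rwa [div_le_iff₀ he2'] at h1
    have hX : (((e2*d1+d2 : ℕ):ℚ) + 1) / ((e1*e2 : ℕ):ℚ)
        ≤ ((d1:ℚ)+1)/e1 + (ρ2:ℚ)/e1 := by
      rw [div_le_iff₀ he12, ← add_div, div_mul_eq_mul_div, le_div_iff₀ he1']
      push_cast
      nlinarith
    have h2 := Int.ceil_le_ceil hX
    have h3 := Int.ceil_add_le (((d1:ℚ)+1)/e1) ((ρ2:ℚ)/e1)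
    unfold rhoOf
    omega

open nonZeroDivisors

section
open IsLocalRing FractionalIdeal
variable (A B C : Type*) [CommRing A] [CommRing B] [CommRing C]
    [IsDomain A] [IsDomain B] [IsDomain C]
    [IsDedekindDomain A] [IsDedekindDomain B] [IsDedekindDomain C]
    [IsPrincipalIdealRing B]
    [Algebra A B] [Algebra B C] [Algebra A C] [IsScalarTower A B C]
    [NoZeroSMulDivisors A B] [NoZeroSMulDivisors B C] [NoZeroSMulDivisors A C]
    [Module.Finite A B] [Module.Finite B C]
    [Algebra.IsSeparable (FractionRing A) (FractionRing B)]
    [Algebra.IsSeparable (FractionRing B) (FractionRing C)]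

/-- the tower of fraction rings -/
lemma frTower : IsScalarTower (FractionRing A) (FractionRing B) (FractionRing C) := by
  apply IsScalarTower.of_algebraMap_eq'
  apply IsLocalization.ringHom_ext A⁰
  ext a
  simp only [RingHom.coe_comp, Function.comp_apply]
  rw [← IsScalarTower.algebraMap_apply A (FractionRing A) (FractionRing C),
    ← IsScalarTower.algebraMap_apply A (FractionRing A) (FractionRing B),
    IsScalarTower.algebraMap_apply A B (FractionRing B),
    ← IsScalarTower.algebraMap_apply B (FractionRing B) (FractionRing C),
    IsScalarTower.algebraMap_apply B C (FractionRing C),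
    ← IsScalarTower.algebraMap_apply A B C,
    ← IsScalarTower.algebraMap_apply A C (FractionRing C)]

set_option maxHeartbeats 1000000 in
lemma differentIdeal_trans :
    differentIdeal A C = differentIdeal B C * (differentIdeal A B).map (algebraMap B C) := by
  haveI := frTower A B C
  haveI : Module.Finite A C := Module.Finite.trans B C
  haveI : IsIntegralClosure B A (FractionRing B) :=
    IsIntegralClosure.of_isIntegrallyClosed _ _ _
  haveI : IsIntegralClosure C B (FractionRing C) :=
    IsIntegralClosure.of_isIntegrallyClosed _ _ _
  haveI : IsIntegralClosure C A (FractionRing C) :=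
    IsIntegralClosure.of_isIntegrallyClosed _ _ _
  haveI : IsLocalization (Algebra.algebraMapSubmonoid B A⁰) (FractionRing B) :=
    IsIntegralClosure.isLocalization _ (FractionRing A) _ _
  haveI : IsLocalization (Algebra.algebraMapSubmonoid C B⁰) (FractionRing C) :=
    IsIntegralClosure.isLocalization _ (FractionRing B) _ _
  haveI : FiniteDimensional (FractionRing A) (FractionRing B) :=
    Module.Finite.of_isLocalization A B A⁰
  haveI : FiniteDimensional (FractionRing B) (FractionRing C) :=
    Module.Finite.of_isLocalization B C B⁰
  haveI : FiniteDimensional (FractionRing A) (FractionRing C) :=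
    Module.Finite.trans (FractionRing B) (FractionRing C)
  haveI : Algebra.IsSeparable (FractionRing A) (FractionRing C) :=
    Algebra.IsSeparable.trans (FractionRing A) (FractionRing B) (FractionRing C)
  set K := FractionRing A
  set L := FractionRing B
  set M := FractionRing C
  set J : Ideal C := (differentIdeal A B).map (algebraMap B C) with hJdef
  -- the different of B/A, as a fractional ideal of L
  have hD1 : (differentIdeal A B : FractionalIdeal B⁰ L) =
      (dual A K (1 : FractionalIdeal B⁰ L))⁻¹ :=
    coeIdeal_differentIdeal A K L B
  have hD1' : ((differentIdeal A B : FractionalIdeal B⁰ L))⁻¹ =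
      dual A K (1 : FractionalIdeal B⁰ L) := by rw [hD1, inv_inv]
  have h1ne : (1 : FractionalIdeal B⁰ L) ≠ 0 := one_ne_zero
  have h1ne' : (1 : FractionalIdeal C⁰ M) ≠ 0 := one_ne_zero
  have hDne : differentIdeal A B ≠ ⊥ := by
    intro h
    have h0 : dual A K (1 : FractionalIdeal B⁰ L) = 0 := by
      rw [← hD1', h, coeIdeal_bot, inv_zero]
    exact dual_ne_zero A K h1ne h0
  have hDcoene : (differentIdeal A B : FractionalIdeal B⁰ L) ≠ 0 :=
    coeIdeal_ne_zero.mpr hDne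
  have hJne : J ≠ ⊥ := by
    rw [hJdef, Ne, Ideal.map_eq_bot_iff_of_injective
      (FaithfulSMul.algebraMap_injective B C)]
    exact hDne
  have hJcoene : (J : FractionalIdeal C⁰ M) ≠ 0 := coeIdeal_ne_zero.mpr hJne
  -- generator of the different of B/A
  obtain ⟨b0, hb0⟩ : ∃ b0 : B, differentIdeal A B = Ideal.span {b0} :=
    ⟨_, (Ideal.span_singleton_generator _).symm⟩
  have hb0mem : b0 ∈ differentIdeal A B := hb0 ▸ Ideal.mem_span_singleton_self b0
  -- commutation of algebra maps
  have hBCM : ∀ b : B, algebraMap L M (algebraMap B L b) = algebraMap C M (algebraMap B C b) := by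
    intro b
    rw [← IsScalarTower.algebraMap_apply B L M, IsScalarTower.algebraMap_apply B C M]
  have htrL : ∀ (b : B) (w : M), Algebra.trace L M (algebraMap C M (algebraMap B C b) * w)
      = algebraMap B L b * Algebra.trace L M w := by
    intro b w
    rw [← hBCM, ← Algebra.smul_def, map_smul, smul_eq_mul]
  -- the key duality identity
  have key : dual A K (1 : FractionalIdeal C⁰ M) = dual B L (J : FractionalIdeal C⁰ M) := by
    refine FractionalIdeal.ext fun x => ⟨fun hx => ?_, fun hx => ?_⟩
    · -- forward
      rw [mem_dual h1ne'] at hx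
      rw [mem_dual hJcoene]
      intro a ha
      obtain ⟨j, hj, rfl⟩ := (mem_coeIdeal _).mp ha
      have hj' : algebraMap B C b0 ∣ j := by
        rw [← Ideal.mem_span_singleton]
        have : J = Ideal.span {algebraMap B C b0} := by
          rw [hJdef, hb0, Ideal.map_span, Set.image_singleton]
        exact this ▸ hj
      obtain ⟨c, rfl⟩ := hj'
      -- the inner trace lands in the inverse different of B/A
      set z := Algebra.trace L M (x * algebraMap C M c) with hz
      have hzmem : z ∈ dual A K (1 : FractionalIdeal B⁰ L) := by
        rw [mem_dual h1ne]
        intro w hw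
        obtain ⟨b, rfl⟩ := (FractionalIdeal.mem_one_iff _).mp hw
        rw [Algebra.traceForm_apply, hz, mul_comm (Algebra.trace L M _),
          ← htrL b (x * algebraMap C M c)]
        have heq : algebraMap C M (algebraMap B C b) * (x * algebraMap C M c) =
            x * algebraMap C M (c * algebraMap B C b) := by
          rw [_root_.map_mul]; ring
        rw [heq, Algebra.trace_trace (R := K) (S := L) (T := M)]
        have := hx _ ((FractionalIdeal.mem_one_iff _).mpr ⟨c * algebraMap B C b, rfl⟩)
        rwa [Algebra.traceForm_apply] at this
      rw [← hD1'] at hzmem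
      have := (mem_inv_iff hDcoene).mp hzmem (algebraMap B L b0)
        ((mem_coeIdeal _).mpr ⟨b0, hb0mem, rfl⟩)
      obtain ⟨b1, hb1⟩ := (FractionalIdeal.mem_one_iff _).mp this
      refine ⟨b1, ?_⟩
      rw [Algebra.traceForm_apply, _root_.map_mul (algebraMap C M) (algebraMap B C b0) c,
        ← mul_assoc, mul_comm x, mul_assoc, htrL, ← hz, mul_comm, hb1]
    · rw [mem_dual hJcoene] at hx
      rw [mem_dual h1ne']
      intro a ha
      obtain ⟨c, rfl⟩ := (FractionalIdeal.mem_one_iff _).mp ha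
      rw [Algebra.traceForm_apply, ← Algebra.trace_trace (R := K) (S := L) (T := M)]
      set z := Algebra.trace L M (x * algebraMap C M c) with hz
      have hzmem : z ∈ dual A K (1 : FractionalIdeal B⁰ L) := by
        rw [← hD1']
        rw [mem_inv_iff hDcoene]
        intro y hy
        obtain ⟨d, hd, rfl⟩ := (mem_coeIdeal _).mp hy
        have hmem : c * algebraMap B C d ∈ J := Ideal.mul_mem_left _ _
          (Ideal.mem_map_of_mem _ hd)
        have := hx _ ((mem_coeIdeal _).mpr ⟨_, hmem, rfl⟩)
        obtain ⟨b, hb⟩ := this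
        rw [Algebra.traceForm_apply] at hb
        rw [hz, mul_comm, ← htrL d (x * algebraMap C M c)]
        refine (FractionalIdeal.mem_one_iff _).mpr ⟨b, ?_⟩
        rw [hb]
        congr 1
        rw [_root_.map_mul]; ring
      have := (mem_dual (I := (1 : FractionalIdeal B⁰ L)) h1ne).mp hzmem 1 (one_mem_one _)
      rwa [Algebra.traceForm_apply, mul_one] at this
  -- conclude the equality of ideals
  have h1 : ((differentIdeal A C : FractionalIdeal C⁰ M)) =
      ((differentIdeal B C * J : Ideal C) : FractionalIdeal C⁰ M) := by
    rw [coeIdeal_differentIdeal A K M C, key, dual_eq_mul_inv B L, mul_inv, inv_inv,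
      ← coeIdeal_differentIdeal B L M C, coeIdeal_mul]
  exact coeIdeal_injective h1

end

open IsLocalRing in
/-- Let `K ⊆ L ⊆ M` be complete discretely valued fields with `M/L` and `L/K`
finite separable totally ramified extensions with the same perfect residue field (encoded via
their rings of integers `A ⊆ B ⊆ C`, complete DVRs with bijective residue maps, with finite
separable extensions of fraction fields, ramification indices `eBA`, `eCB` equal to the degrees,
and different exponents `dBA = v_L(𝔇_{L/K})`, `dCB = v_M(𝔇_{M/L})`, `dCA = v_M(𝔇_{M/K})`).
Then `ρ_{L/K} ≤ ρ_{M/K} ≤ ρ_{L/K} + ⌈ρ_{M/L}/e_{L/K}⌉`, where `ρ = ⌈(d+1)/e⌉ - 1`. -/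
theorem stmt_0
    (A B C : Type*) [CommRing A] [CommRing B] [CommRing C]
    [IsDomain A] [IsDomain B] [IsDomain C]
    [IsDiscreteValuationRing A] [IsDiscreteValuationRing B] [IsDiscreteValuationRing C]
    [IsAdicComplete (maximalIdeal A) A] [IsAdicComplete (maximalIdeal B) B]
    [IsAdicComplete (maximalIdeal C) C]
    [Algebra A B] [Algebra B C] [Algebra A C] [IsScalarTower A B C]
    [NoZeroSMulDivisors A B] [NoZeroSMulDivisors B C] [NoZeroSMulDivisors A C]
    [Module.Finite A B] [Module.Finite B C]
    [IsLocalHom (algebraMap A B)] [IsLocalHom (algebraMap B C)]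
    (hres₁ : Function.Bijective (ResidueField.map (algebraMap A B)))
    (hres₂ : Function.Bijective (ResidueField.map (algebraMap B C)))
    [PerfectField (ResidueField A)]
    [Algebra.IsSeparable (FractionRing A) (FractionRing B)]
    [Algebra.IsSeparable (FractionRing B) (FractionRing C)]
    (eBA eCB dBA dCB dCA : ℕ)
    (he₁ : (maximalIdeal A).map (algebraMap A B) = maximalIdeal B ^ eBA)
    (he₂ : (maximalIdeal B).map (algebraMap B C) = maximalIdeal C ^ eCB)
    (htot₁ : eBA = Module.finrank (FractionRing A) (FractionRing B))
    (htot₂ : eCB = Module.finrank (FractionRing B) (FractionRing C))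
    (hd₁ : differentIdeal A B = maximalIdeal B ^ dBA)
    (hd₂ : differentIdeal B C = maximalIdeal C ^ dCB)
    (hd₃ : differentIdeal A C = maximalIdeal C ^ dCA) :
    rhoOf dBA eBA ≤ rhoOf dCA (eBA * eCB) ∧
      rhoOf dCA (eBA * eCB) ≤ rhoOf dBA eBA + ⌈((rhoOf dCB eCB : ℚ)) / (eBA : ℚ)⌉ := by
    -- finite dimensionality of the fraction field extensions
  haveI : IsIntegralClosure B A (FractionRing B) :=
    IsIntegralClosure.of_isIntegrallyClosed _ _ _
  haveI : IsIntegralClosure C B (FractionRing C) :=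
    IsIntegralClosure.of_isIntegrallyClosed _ _ _
  haveI : IsLocalization (Algebra.algebraMapSubmonoid B A⁰) (FractionRing B) :=
    IsIntegralClosure.isLocalization _ (FractionRing A) _ _
  haveI : IsLocalization (Algebra.algebraMapSubmonoid C B⁰) (FractionRing C) :=
    IsIntegralClosure.isLocalization _ (FractionRing B) _ _
  haveI : FiniteDimensional (FractionRing A) (FractionRing B) :=
    Module.Finite.of_isLocalization A B A⁰
  haveI : FiniteDimensional (FractionRing B) (FractionRing C) :=
    Module.Finite.of_isLocalization B C B⁰
  have he1 : 0 < eBA := htot₁ ▸ Module.finrank_pos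
  have he2 : 0 < eCB := htot₂ ▸ Module.finrank_pos
  -- the maximal ideal of C is a nonzero nonunit
  have hQC : maximalIdeal C ≠ ⊥ := IsDiscreteValuationRing.not_a_field C
  have hQC0 : maximalIdeal C ≠ 0 := by rwa [Ideal.zero_eq_bot]
  have hQCnu : ¬ IsUnit (maximalIdeal C) := fun h =>
    (IsLocalRing.maximalIdeal.isMaximal C).ne_top (Ideal.isUnit_iff.mp h)
  -- transitivity of the different exponent
  have hmap : (differentIdeal A B).map (algebraMap B C) = maximalIdeal C ^ (eCB * dBA) := by
    rw [hd₁, Ideal.map_pow, he₂, ← pow_mul]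
  have hEq : maximalIdeal C ^ dCA = maximalIdeal C ^ (dCB + eCB * dBA) := by
    rw [← hd₃, differentIdeal_trans A B C, hd₂, hmap, ← pow_add]
  have hexp : dCA = eCB * dBA + dCB := by
    have := (pow_inj_of_not_isUnit hQCnu hQC0).mp hEq
    omega
  -- lower bound on the different exponent of C/B
  have hQB : maximalIdeal B ≠ ⊥ := IsDiscreteValuationRing.not_a_field B
  have hdvd : (maximalIdeal C) ^ (eCB - 1) ∣ differentIdeal B C :=
    pow_sub_one_dvd_differentIdeal B (maximalIdeal C) eCB hQB (by rw [he₂])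
  have hd2 : eCB ≤ dCB + 1 := by
    rw [hd₂] at hdvd
    have := (pow_dvd_pow_iff hQC0 hQCnu).mp hdvd
    omega
  rw [hexp]
  exact rho_arith dBA dCB eBA eCB he1 he2 hd2
end

section
/- Let G be a finite abelian group. Then the sum over all positive integers m of μ(m)·χ(m), where χ(m) = 1 if G contains a subgroup isomorphic to (ℤ/mℤ) × (ℤ/mℤ) and χ(m) = 0 otherwise (only finitely many terms are nonzero), equals 1 if G is cyclic and equals 0 if G is not cyclic. -/
open Function

/-- An element of additive order `m` gives an injective hom `ZMod m →+ A` with range in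
its multiples. -/
lemma aux_zmod_lift_inj {A : Type*} [AddCommGroup A] {m : ℕ} (a : A) (ha : addOrderOf a = m) :
    ∃ g : ZMod m →+ A, Injective g ∧ ∀ x, ∃ i : ℤ, g x = i • a := by
  subst ha
  refine ⟨ZMod.lift (addOrderOf a) ⟨zmultiplesHom A a, ?_⟩, ?_, ?_⟩
  · simp [addOrderOf_dvd_iff_zsmul_eq_zero.mp dvd_rfl]
  · rw [injective_iff_map_eq_zero]
    intro x hx
    obtain ⟨k, rfl⟩ := ZMod.intCast_surjective x
    rw [ZMod.lift_coe] at hx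
    have : (addOrderOf a : ℤ) ∣ k := addOrderOf_dvd_iff_zsmul_eq_zero.mpr hx
    exact (ZMod.intCast_zmod_eq_zero_iff_dvd k (addOrderOf a)).mpr this
  · intro x
    obtain ⟨k, rfl⟩ := ZMod.intCast_surjective x
    exact ⟨k, by rw [ZMod.lift_coe]; rfl⟩

/-- Two "independent" elements of additive order `m` give an injective hom from `(ZMod m)²`. -/
lemma aux_pair_inj {A : Type*} [AddCommGroup A] {m : ℕ} (a b : A)
    (ha : addOrderOf a = m) (hb : addOrderOf b = m)
    (hab : ∀ (i j : ℤ), i • a = j • b → i • a = 0) :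
    ∃ f : ZMod m × ZMod m →+ A, Injective f := by
  obtain ⟨g₁, hg₁, hr₁⟩ := aux_zmod_lift_inj a ha
  obtain ⟨g₂, hg₂, hr₂⟩ := aux_zmod_lift_inj b hb
  refine ⟨g₁.coprod g₂, ?_⟩
  rw [injective_iff_map_eq_zero]
  rintro ⟨x, y⟩ hxy
  rw [AddMonoidHom.coprod_apply] at hxy
  obtain ⟨i, hi⟩ := hr₁ x
  obtain ⟨j, hj⟩ := hr₂ y
  have h1 : i • a = (-j) • b := by
    rw [neg_smul, ← hj, ← hi]
    exact eq_neg_of_add_eq_zero_left hxy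
  have h2 : g₁ x = 0 := by
    rw [hi]; exact hab i (-j) h1
  have h3 : g₂ y = 0 := by
    have := hxy
    rw [h2, zero_add] at this
    exact this
  have hx0 : x = 0 := hg₁ (by rw [h2, map_zero])
  have hy0 : y = 0 := hg₂ (by rw [h3, map_zero])
  simp [hx0, hy0]

/-- Elements of `(ZMod m)²` are killed by `m`. -/
lemma aux_smul_zmod_sq (m : ℕ) (x : ZMod m × ZMod m) : m • x = 0 := by
  ext
  · show m • x.1 = 0
    rw [nsmul_eq_mul, ZMod.natCast_self, zero_mul]
  · show m • x.2 = 0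
    rw [nsmul_eq_mul, ZMod.natCast_self, zero_mul]

/-- Coprime closure. -/
lemma aux_coprime_inj {A : Type*} [AddCommGroup A] {m n : ℕ} (hmn : Nat.Coprime m n)
    (f : ZMod m × ZMod m →+ A) (hf : Injective f)
    (g : ZMod n × ZMod n →+ A) (hg : Injective g) :
    ∃ h : ZMod (m * n) × ZMod (m * n) →+ A, Injective h := by
  have hfg : Injective ⇑(f.coprod g) := by
    rw [injective_iff_map_eq_zero]
    rintro ⟨x, y⟩ hxy
    rw [AddMonoidHom.coprod_apply] at hxy
    have hox : addOrderOf (f x) ∣ m := addOrderOf_dvd_of_nsmul_eq_zero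
      (by rw [← map_nsmul, aux_smul_zmod_sq, map_zero])
    have hoy : addOrderOf (f x) ∣ n := by
      have : f x = -(g y) := eq_neg_of_add_eq_zero_left hxy
      rw [this, addOrderOf_neg]
      exact addOrderOf_dvd_of_nsmul_eq_zero (by rw [← map_nsmul, aux_smul_zmod_sq, map_zero])
    have h1 : addOrderOf (f x) = 1 := Nat.eq_one_of_dvd_coprimes hmn hox hoy
    have hfx : f x = 0 := AddMonoid.addOrderOf_eq_one_iff.mp h1
    have hgy : g y = 0 := by rwa [hfx, zero_add] at hxy
    have hx0 : x = 0 := hf (by rw [hfx, map_zero])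
    have hy0 : y = 0 := hg (by rw [hgy, map_zero])
    simp [hx0, hy0]
  let c : ZMod (m * n) ≃+ ZMod m × ZMod n := (ZMod.chineseRemainder hmn).toAddEquiv
  let e : (ZMod (m * n) × ZMod (m * n)) ≃+ (ZMod m × ZMod n) × ZMod m × ZMod n :=
    AddEquiv.prodCongr c c
  let r : ((ZMod m × ZMod n) × ZMod m × ZMod n) ≃+ (ZMod m × ZMod m) × ZMod n × ZMod n :=
    AddEquiv.prodProdProdComm _ _ _ _
  exact ⟨(f.coprod g).comp ((r.toAddMonoidHom).comp e.toAddMonoidHom),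
    hfg.comp (r.injective.comp e.injective)⟩

/-- Divisor closure. -/
lemma aux_dvd_inj {A : Type*} [AddCommGroup A] {m d : ℕ} (hm : m ≠ 0) (hd : d ∣ m)
    (f : ZMod m × ZMod m →+ A) (hf : Injective f) :
    ∃ h : ZMod d × ZMod d →+ A, Injective h := by
  have hdn : d ≠ 0 := by rintro rfl; exact hm (Nat.zero_dvd.mp hd)
  have hdvd : m / d ∣ m := Nat.div_dvd_of_dvd hd
  have horder : addOrderOf ((↑(m / d) : ZMod m)) = d := by
    rw [ZMod.addOrderOf_coe _ hm, Nat.gcd_eq_right hdvd, Nat.div_div_self hd hm]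
  obtain ⟨g, hg, -⟩ := aux_zmod_lift_inj _ horder
  exact ⟨f.comp (g.prodMap g), hf.comp (hg.prodMap hg)⟩

/-- Bridge between the subgroup formulation and injective additive homs. -/
lemma aux_P_iff (G : Type*) [CommGroup G] (m : ℕ) :
    (∃ H : Subgroup G, Nonempty (H ≃* Multiplicative (ZMod m × ZMod m))) ↔
      ∃ f : ZMod m × ZMod m →+ Additive G, Injective f := by
  constructor
  · rintro ⟨H, ⟨e⟩⟩
    let φ : Multiplicative (ZMod m × ZMod m) →* G := H.subtype.comp e.symm.toMonoidHom
    have hφ : Injective φ := H.subtype_injective.comp e.symm.injective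
    refine ⟨AddMonoidHom.toMultiplicativeLeft.symm φ, ?_⟩
    have : ⇑(AddMonoidHom.toMultiplicativeLeft.symm φ)
        = ⇑Additive.ofMul ∘ ⇑φ ∘ ⇑Multiplicative.ofAdd := rfl
    rw [this]
    exact Additive.ofMul.injective.comp (hφ.comp Multiplicative.ofAdd.injective)
  · rintro ⟨f, hf⟩
    let φ : Multiplicative (ZMod m × ZMod m) →* G := AddMonoidHom.toMultiplicativeLeft f
    have hφ : Injective φ := by
      have : ⇑φ = ⇑Additive.toMul ∘ ⇑f ∘ ⇑Multiplicative.toAdd := rfl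
      rw [this]
      exact Additive.toMul.injective.comp (hf.comp Multiplicative.toAdd.injective)
    exact ⟨φ.range, ⟨(MonoidHom.ofInjective hφ).symm⟩⟩

/-- Two independent elements of order `p` give `(ZMod p)²` inside `G`. -/
lemma aux_pair_mul {G : Type*} [CommGroup G] {p : ℕ} (x y : G)
    (hx : orderOf x = p) (hy : orderOf y = p)
    (hxy : Subgroup.zpowers x ⊓ Subgroup.zpowers y = ⊥) :
    ∃ f : ZMod p × ZMod p →+ Additive G, Injective f := by
  apply aux_pair_inj (Additive.ofMul x) (Additive.ofMul y)
  · rw [addOrderOf_ofMul_eq_orderOf, hx]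
  · rw [addOrderOf_ofMul_eq_orderOf, hy]
  · intro i j hij
    have h1 : x ^ i = y ^ j := by
      have := hij
      simpa [← ofMul_zpow] using this
    have hmem : x ^ i ∈ Subgroup.zpowers x ⊓ Subgroup.zpowers y := by
      refine ⟨Subgroup.zpow_mem _ (Subgroup.mem_zpowers x) i, ?_⟩
      rw [h1]
      exact Subgroup.zpow_mem _ (Subgroup.mem_zpowers y) j
    rw [hxy, Subgroup.mem_bot] at hmem
    show i • Additive.ofMul x = 0
    rw [← ofMul_zpow, hmem]
    rfl

/-- If the `p`-torsion has more than `p` elements, we find `(ZMod p)²` inside `G`. -/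
lemma aux_prime_torsion {G : Type*} [CommGroup G] [Finite G] {p : ℕ} (hp : p.Prime)
    (h : p < Nat.card (MonoidHom.ker (powMonoidHom p : G →* G))) :
    ∃ f : ZMod p × ZMod p →+ Additive G, Injective f := by
  set T := MonoidHom.ker (powMonoidHom p : G →* G) with hT
  have hmemT : ∀ z : G, z ∈ T ↔ z ^ p = 1 := fun z => Iff.rfl
  have hord : ∀ z : G, z ∈ T → z ≠ 1 → orderOf z = p := by
    intro z hz hz1
    have := orderOf_dvd_of_pow_eq_one ((hmemT z).mp hz)
    rcases (Nat.Prime.eq_one_or_self_of_dvd hp _ this) with h1 | h1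
    · exact absurd (orderOf_eq_one_iff.mp h1) hz1
    · exact h1
  have hnt : Nontrivial T := Finite.one_lt_card_iff_nontrivial.mp (lt_trans hp.one_lt h)
  obtain ⟨⟨x, hxT⟩, hx1⟩ := exists_ne (1 : T)
  have hx1' : x ≠ 1 := fun hc => hx1 (Subtype.ext hc)
  have hxo : orderOf x = p := hord x hxT hx1'
  have hzx : Subgroup.zpowers x ≤ T := Subgroup.zpowers_le.mpr hxT
  have hy : ∃ y ∈ T, y ∉ Subgroup.zpowers x := by
    by_contra hc
    push_neg at hc
    have : T ≤ Subgroup.zpowers x := hc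
    have := Subgroup.card_le_of_le this
    rw [Nat.card_zpowers, hxo] at this
    omega
  obtain ⟨y, hyT, hyx⟩ := hy
  have hy1 : y ≠ 1 := fun hc => hyx (hc ▸ Subgroup.one_mem _)
  have hyo : orderOf y = p := hord y hyT hy1
  have hbot : Subgroup.zpowers x ⊓ Subgroup.zpowers y = ⊥ := by
    by_contra hc
    have hdvd : Nat.card (Subgroup.zpowers x ⊓ Subgroup.zpowers y : Subgroup G)
        ∣ Nat.card (Subgroup.zpowers y) := Subgroup.card_dvd_of_le inf_le_right
    rw [Nat.card_zpowers, hyo] at hdvd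
    rcases (Nat.Prime.eq_one_or_self_of_dvd hp _ hdvd) with h1 | h1
    · exact hc (Subgroup.card_eq_one.mp h1)
    · have heq : Subgroup.zpowers x ⊓ Subgroup.zpowers y = Subgroup.zpowers y := by
        apply Subgroup.eq_of_le_of_card_ge inf_le_right
        rw [h1, Nat.card_zpowers, hyo]
      have : y ∈ Subgroup.zpowers x ⊓ Subgroup.zpowers y := by
        rw [heq]; exact Subgroup.mem_zpowers y
      exact hyx this.1
  exact aux_pair_mul x y hxo hyo hbot

/-- Torsion counting: if no `(ZMod p)²` injects, torsion subgroups are small. -/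
lemma aux_torsion_card {G : Type*} [CommGroup G] [Finite G]
    (hp : ∀ p : ℕ, p.Prime → ¬ ∃ f : ZMod p × ZMod p →+ Additive G, Injective f) :
    ∀ n : ℕ, n ≠ 0 → Nat.card (MonoidHom.ker (powMonoidHom n : G →* G)) ≤ n := by
  intro n
  induction n using Nat.strong_induction_on with
  | _ n ih =>
    intro hn
    rcases eq_or_ne n 1 with rfl | hn1
    · have hbot : (MonoidHom.ker (powMonoidHom 1 : G →* G)) = ⊥ := by
        ext z; simp [MonoidHom.mem_ker, powMonoidHom_apply, Subgroup.mem_bot]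
      rw [hbot]
      simp
    · have h2 : 2 ≤ n := by omega
      set p := n.minFac with hpdef
      have hpp : p.Prime := Nat.minFac_prime hn1
      have hpd : p ∣ n := Nat.minFac_dvd n
      have hppos : 0 < p := hpp.pos
      have hq : n / p ≠ 0 := by
        have := Nat.div_pos (Nat.le_of_dvd (by omega) hpd) hppos; omega
      have hqlt : n / p < n := Nat.div_lt_self (by omega) hpp.one_lt
      set Tn := MonoidHom.ker (powMonoidHom n : G →* G) with hTn
      set Tq := MonoidHom.ker (powMonoidHom (n / p) : G →* G) with hTq
      set Tp := MonoidHom.ker (powMonoidHom p : G →* G) with hTp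
      have hmem : ∀ z : G, z ∈ Tn → (z ^ p) ^ (n / p) = 1 := by
        intro z hz
        rw [← pow_mul, Nat.mul_div_cancel' hpd]
        exact hz
      let F : Tn →* Tq := {
        toFun := fun z => ⟨z.1 ^ p, hmem z.1 z.2⟩
        map_one' := by ext; simp
        map_mul' := by intro a b; ext; simp [mul_pow] }
      have hker : Nat.card F.ker ≤ p := by
        have hploc : Nat.card Tp ≤ p := by
          by_contra hcon
          push_neg at hcon
          exact hp p hpp (aux_prime_torsion hpp hcon)
        have hinj : Function.Injective (fun z : F.ker => (⟨z.1.1, by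
            have hz := z.2
            rw [MonoidHom.mem_ker] at hz
            have : (z.1.1 : G) ^ p = 1 := congrArg Subtype.val hz
            exact this⟩ : Tp)) := by
          intro a b hab
          have hv : (a.1.1 : G) = b.1.1 := congrArg (fun t : Tp => (t : G)) hab
          exact Subtype.ext (Subtype.ext hv)
        calc Nat.card F.ker ≤ Nat.card Tp := Nat.card_le_card_of_injective _ hinj
          _ ≤ p := hploc
      have hrange : Nat.card F.range ≤ n / p := by
        calc Nat.card F.range ≤ Nat.card Tq :=
              Nat.card_le_card_of_injective _ Subtype.val_injective
          _ ≤ n / p := ih (n / p) hqlt hq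
      calc Nat.card Tn = Nat.card (Tn ⧸ F.ker) * Nat.card F.ker :=
            Subgroup.card_eq_card_quotient_mul_card_subgroup F.ker
        _ = Nat.card F.range * Nat.card F.ker := by
            rw [Nat.card_congr (QuotientGroup.quotientKerEquivRange F).toEquiv]
        _ ≤ (n / p) * p := Nat.mul_le_mul hrange hker
        _ = n := Nat.div_mul_cancel hpd

open scoped Classical in
/-- Without any `(ZMod p)²` inside, a finite abelian group is cyclic. -/
lemma aux_cyclic {G : Type*} [CommGroup G] [Finite G]
    (hp : ∀ p : ℕ, p.Prime → ¬ ∃ f : ZMod p × ZMod p →+ Additive G, Injective f) :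
    IsCyclic G := by
  cases nonempty_fintype G
  apply isCyclic_of_card_pow_eq_one_le
  intro n hn
  have hle := aux_torsion_card hp n (by omega)
  have hcard : ({a : G | a ^ n = 1} : Finset G).card
      = Nat.card (MonoidHom.ker (powMonoidHom n : G →* G)) := by
    rw [Nat.card_eq_fintype_card, Fintype.card_subtype]
    apply congrArg
    apply Finset.filter_congr
    intro z _
    simp [MonoidHom.mem_ker]
  omega

/-- A cyclic group contains no `(ZMod m)²` for `m ≥ 2`. -/
lemma aux_not_P_of_cyclic {G : Type*} [CommGroup G] [Finite G] (hc : IsCyclic G)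
    {m : ℕ} (hm : 2 ≤ m) :
    ¬ ∃ H : Subgroup G, Nonempty (H ≃* Multiplicative (ZMod m × ZMod m)) := by
  rintro ⟨H, ⟨e⟩⟩
  haveI := hc
  haveI : IsCyclic H := Subgroup.isCyclic H
  have hcy : IsCyclic (Multiplicative (ZMod m × ZMod m)) :=
    isCyclic_of_surjective e e.surjective
  have hexp : Monoid.exponent (Multiplicative (ZMod m × ZMod m)) ∣ m := by
    apply Monoid.exponent_dvd_of_forall_pow_eq_one
    intro x
    apply Multiplicative.toAdd.injective
    rw [toAdd_pow, toAdd_one, aux_smul_zmod_sq]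
  have hcard : Nat.card (Multiplicative (ZMod m × ZMod m)) = m * m := by
    rw [Nat.card_congr Multiplicative.toAdd, Nat.card_prod, Nat.card_zmod]
  have heq := hcy.exponent_eq_card
  rw [hcard] at heq
  rw [heq] at hexp
  have hle : m * m ≤ m := Nat.le_of_dvd (by omega) hexp
  nlinarith


open scoped Classical in
/-- For a finite abelian group `G`, the sum over all positive integers `m` of
`μ(m)·χ(m)`, where `χ(m) = 1` iff `G` contains a subgroup isomorphic to `(ℤ/mℤ)²`, equals `1`
if `G` is cyclic and `0` otherwise. (Only finitely many terms are nonzero; `μ(0) = 0`.) -/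
theorem stmt_3 (G : Type*) [CommGroup G] [Finite G] :
    (∑ᶠ m : ℕ, ((ArithmeticFunction.moebius m : ℤ) *
        (if ∃ H : Subgroup G, Nonempty (H ≃* Multiplicative (ZMod m × ZMod m)) then 1 else 0))) =
      if IsCyclic G then 1 else 0 := by
  
  set P : ℕ → Prop := fun m => ∃ H : Subgroup G, Nonempty (H ≃* Multiplicative (ZMod m × ZMod m))
    with hPdef
  have hP1 : P 1 :=
    (aux_P_iff G 1).mpr ⟨0, fun a b _ => Subsingleton.elim a b⟩
  have hP0 : ¬ P 0 := by
    intro h0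
    obtain ⟨f, hf⟩ := (aux_P_iff G 0).mp h0
    have : Finite (ZMod 0 × ZMod 0) := Finite.of_injective f hf
    exact not_finite (ZMod 0 × ZMod 0)
  have hPpos : ∀ m, P m → 0 < m := by
    intro m hm
    rcases Nat.eq_zero_or_pos m with rfl | h
    · exact absurd hm hP0
    · exact h
  have hPle : ∀ m, P m → m ≤ Nat.card G := by
    intro m hm
    have hm0 := hPpos m hm
    obtain ⟨f, hf⟩ := (aux_P_iff G m).mp hm
    have h1 : Nat.card (ZMod m × ZMod m) ≤ Nat.card (Additive G) :=
      Nat.card_le_card_of_injective f hf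
    rw [Nat.card_prod, Nat.card_zmod] at h1
    have h2 : Nat.card (Additive G) = Nat.card G := rfl
    nlinarith
  have hPdvd : ∀ m k : ℕ, k ∣ m → P m → P k := by
    intro m k hkm hm
    have hm0 : m ≠ 0 := (hPpos m hm).ne'
    obtain ⟨f, hf⟩ := (aux_P_iff G m).mp hm
    exact (aux_P_iff G k).mpr (aux_dvd_inj hm0 hkm f hf)
  have hPmul : ∀ m n : ℕ, Nat.Coprime m n → P m → P n → P (m * n) := by
    intro m n hmn hm hn
    obtain ⟨f, hf⟩ := (aux_P_iff G m).mp hm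
    obtain ⟨g, hg⟩ := (aux_P_iff G n).mp hn
    exact (aux_P_iff G (m * n)).mpr (aux_coprime_inj hmn f hf g hg)
  -- the finite set of all m with P m, and its maximum d
  set S : Finset ℕ := (Finset.range (Nat.card G + 1)).filter P with hS
  have hmemS : ∀ m, m ∈ S ↔ P m := by
    intro m
    rw [hS, Finset.mem_filter, Finset.mem_range]
    exact ⟨fun h => h.2, fun h => ⟨by have := hPle m h; omega, h⟩⟩
  have hSne : S.Nonempty := ⟨1, (hmemS 1).mpr hP1⟩
  set d := S.max' hSne with hd
  have hdS : P d := (hmemS d).mp (S.max'_mem hSne)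
  have hdmax : ∀ m, P m → m ≤ d := fun m hm => S.le_max' m ((hmemS m).mpr hm)
  have hdpos : 0 < d := hPpos d hdS
  have hiff : ∀ m, P m ↔ m ∣ d := by
    intro m
    constructor
    · intro hm
      by_contra hnd
      obtain ⟨p, hv⟩ : ∃ p, d.factorization p < m.factorization p := by
        by_contra hcon
        push_neg at hcon
        apply hnd
        rw [← Nat.factorization_le_iff_dvd (hPpos m hm).ne' hdpos.ne']
        exact fun p => hcon p
      have hp : p.Prime := by
        by_contra hcp
        rw [Nat.factorization_eq_zero_of_not_prime m hcp] at hv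
        omega
      have hq : P (p ^ m.factorization p) := hPdvd m _ (Nat.ordProj_dvd m p) hm
      have hd' : P (ordCompl[p] d) := hPdvd d _ (Nat.ordCompl_dvd d p) hdS
      have hcop : Nat.Coprime (p ^ m.factorization p) (ordCompl[p] d) :=
        Nat.Coprime.pow_left _ (Nat.coprime_ordCompl hp hdpos.ne')
      have hbig : P (p ^ m.factorization p * ordCompl[p] d) := hPmul _ _ hcop hq hd'
      have hle := hdmax _ hbig
      have hdeq : p ^ d.factorization p * ordCompl[p] d = d :=
        Nat.ordProj_mul_ordCompl_eq_self d p
      have hcompos : 0 < ordCompl[p] d := Nat.ordCompl_pos p hdpos.ne'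
      have hpow : p ^ d.factorization p < p ^ m.factorization p :=
        Nat.pow_lt_pow_right hp.one_lt hv
      have : d < p ^ m.factorization p * ordCompl[p] d := by
        calc d = p ^ d.factorization p * ordCompl[p] d := hdeq.symm
          _ < p ^ m.factorization p * ordCompl[p] d := by
              exact Nat.mul_lt_mul_of_lt_of_le hpow le_rfl hcompos
      omega
    · exact fun hdvd => hPdvd d m hdvd hdS
  -- rewrite the finsum as a finite sum over divisors of d
  have hsupp : Function.support
      (fun m : ℕ => (ArithmeticFunction.moebius m : ℤ) * (if P m then 1 else 0))
      ⊆ ↑(d.divisors) := by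
    intro m hm
    rw [Function.mem_support] at hm
    have hPm : P m := by
      by_contra hc
      rw [if_neg hc, mul_zero] at hm
      exact hm rfl
    rw [Finset.mem_coe, Nat.mem_divisors]
    exact ⟨(hiff m).mp hPm, hdpos.ne'⟩
  rw [finsum_eq_sum_of_support_subset _ hsupp]
  have hstep : ∑ m ∈ d.divisors, (ArithmeticFunction.moebius m : ℤ) * (if P m then 1 else 0)
      = ∑ m ∈ d.divisors, (ArithmeticFunction.moebius m : ℤ) := by
    apply Finset.sum_congr rfl
    intro m hm
    rw [if_pos ((hiff m).mpr (Nat.dvd_of_mem_divisors hm)), mul_one]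
  rw [hstep]
  have hfin : IsCyclic G ↔ d = 1 := by
    constructor
    · intro hc
      by_contra hne
      have h2 : 2 ≤ d := by omega
      exact aux_not_P_of_cyclic hc h2 hdS
    · intro h1
      apply aux_cyclic
      intro p hp hf
      have hPp : P p := (aux_P_iff G p).mpr hf
      have hpd := (hiff p).mp hPp
      rw [h1, Nat.dvd_one] at hpd
      exact hp.one_lt.ne' hpd
  have hsum := congrArg (fun F : ArithmeticFunction ℤ => F d)
    ArithmeticFunction.moebius_mul_coe_zeta
  simp only [ArithmeticFunction.coe_mul_zeta_apply, ArithmeticFunction.one_apply] at hsum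
  by_cases hd1 : d = 1
  · rw [if_pos (hfin.mpr hd1), hsum, if_pos hd1]
  · rw [if_neg (fun hc => hd1 (hfin.mp hc)), hsum, if_neg hd1]
end

section
/- Let q₁, q₂, q₃ be pairwise coprime integers, each greater than 2, and set N = q₁q₂q₃. For i = 1, 2, 3 let x_i ∈ ℤ/Nℤ be the element (given by the Chinese remainder theorem) with x_i ≡ 1 (mod q_i) and x_i ≡ −1 (mod q_j) for j ≠ i. Then the set H = {diag(1,1), diag(x₁,x₁), diag(x₂,x₂), diag(x₃,x₃)} of scalar matrices is a subgroup of SL₂(ℤ/Nℤ) isomorphic to (ℤ/2ℤ)², and for every h ∈ H there exists a prime ℓ dividing N with π_ℓ(h) = 1, i.e. H = ⋃_{ℓ prime, ℓ | N} H_ℓ. -/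
lemma crt_inj_aux {q₁ q₂ q₃ N : ℕ} (hN : N = q₁ * q₂ * q₃)
    (h₁₂ : Nat.Coprime q₁ q₂) (h₁₃ : Nat.Coprime q₁ q₃) (h₂₃ : Nat.Coprime q₂ q₃)
    (hNpos : 0 < N)
    (hd₁ : q₁ ∣ N) (hd₂ : q₂ ∣ N) (hd₃ : q₃ ∣ N) {a b : ZMod N}
    (e₁ : ZMod.castHom hd₁ (ZMod q₁) a = ZMod.castHom hd₁ (ZMod q₁) b)
    (e₂ : ZMod.castHom hd₂ (ZMod q₂) a = ZMod.castHom hd₂ (ZMod q₂) b)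
    (e₃ : ZMod.castHom hd₃ (ZMod q₃) a = ZMod.castHom hd₃ (ZMod q₃) b) : a = b := by
  haveI : NeZero N := ⟨hNpos.ne'⟩
  have key : ∀ d : ZMod N, ZMod.castHom hd₁ (ZMod q₁) d = 0 →
      ZMod.castHom hd₂ (ZMod q₂) d = 0 → ZMod.castHom hd₃ (ZMod q₃) d = 0 → d = 0 := by
    intro d k₁ k₂ k₃
    have hv : ∀ (q : ℕ) (hd : q ∣ N), ZMod.castHom hd (ZMod q) d = ((d.val : ℕ) : ZMod q) := by
      intro q hd
      rw [ZMod.castHom_apply, ← ZMod.natCast_val]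
    rw [hv q₁ hd₁] at k₁; rw [hv q₂ hd₂] at k₂; rw [hv q₃ hd₃] at k₃
    have dv₁ : q₁ ∣ d.val := (ZMod.natCast_eq_zero_iff _ _).mp k₁
    have dv₂ : q₂ ∣ d.val := (ZMod.natCast_eq_zero_iff _ _).mp k₂
    have dv₃ : q₃ ∣ d.val := (ZMod.natCast_eq_zero_iff _ _).mp k₃
    have dv₁₂ : q₁ * q₂ ∣ d.val := Nat.Coprime.mul_dvd_of_dvd_of_dvd h₁₂ dv₁ dv₂
    have h' : q₁ * q₂ * q₃ ∣ d.val :=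
      Nat.Coprime.mul_dvd_of_dvd_of_dvd (Nat.Coprime.mul h₁₃ h₂₃) dv₁₂ dv₃
    rw [← hN] at h'
    have hd : ((d.val : ℕ) : ZMod N) = d := by simp [ZMod.natCast_val, ZMod.cast_id]
    rw [← hd]
    exact (ZMod.natCast_eq_zero_iff _ _).mpr h'
  exact sub_eq_zero.mp (key (a - b) (by rw [map_sub, e₁, sub_self])
    (by rw [map_sub, e₂, sub_self]) (by rw [map_sub, e₃, sub_self]))

lemma smul_one_map_aux {R S : Type*} [CommRing R] [CommRing S] (f : R →+* S) (x : R) :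
    (x • (1 : Matrix (Fin 2) (Fin 2) R)).map f = f x • (1 : Matrix (Fin 2) (Fin 2) S) := by
  ext i j
  simp [Matrix.map_apply, Matrix.one_apply, apply_ite f]

lemma smul_one_mul_smul_one_aux {R : Type*} [CommRing R] (x y : R) :
    (x • (1 : Matrix (Fin 2) (Fin 2) R)) * (y • 1) = (x * y) • 1 := by
  rw [smul_mul_assoc, mul_smul_comm, smul_smul, one_mul]

lemma det_smul_one_aux {R : Type*} [CommRing R] (x : R) :
    (x • (1 : Matrix (Fin 2) (Fin 2) R)).det = x * x := by
  rw [Matrix.det_smul, Matrix.det_one, mul_one]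
  norm_num [sq]

lemma smul_one_inj_aux {R : Type*} [CommRing R] {x y : R}
    (h : x • (1 : Matrix (Fin 2) (Fin 2) R) = y • 1) : x = y := by
  have := congrFun (congrFun h 0) 0
  simpa [Matrix.one_apply] using this

set_option maxHeartbeats 1600000 in
open Matrix in
/-- Let `q₁, q₂, q₃ > 2` be pairwise coprime, `N = q₁q₂q₃`, and let
`x₁, x₂, x₃ ∈ ℤ/Nℤ` satisfy `xᵢ ≡ 1 (mod qᵢ)` and `xᵢ ≡ -1 (mod qⱼ)` for `j ≠ i`. Then the
scalar matrices `{1, x₁•1, x₂•1, x₃•1}` form a subgroup `H` of `SL₂(ℤ/Nℤ)` isomorphic to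
`(ℤ/2ℤ)²`, and every element of `H` reduces to the identity modulo some prime `ℓ ∣ N`. -/
theorem stmt_5 (q₁ q₂ q₃ : ℕ) (h₁ : 2 < q₁) (h₂ : 2 < q₂) (h₃ : 2 < q₃)
    (h₁₂ : Nat.Coprime q₁ q₂) (h₁₃ : Nat.Coprime q₁ q₃) (h₂₃ : Nat.Coprime q₂ q₃)
    (N : ℕ) (hN : N = q₁ * q₂ * q₃)
    (hd₁ : q₁ ∣ N) (hd₂ : q₂ ∣ N) (hd₃ : q₃ ∣ N)
    (x₁ x₂ x₃ : ZMod N)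
    (hx₁₁ : ZMod.castHom hd₁ (ZMod q₁) x₁ = 1)
    (hx₁₂ : ZMod.castHom hd₂ (ZMod q₂) x₁ = -1)
    (hx₁₃ : ZMod.castHom hd₃ (ZMod q₃) x₁ = -1)
    (hx₂₁ : ZMod.castHom hd₁ (ZMod q₁) x₂ = -1)
    (hx₂₂ : ZMod.castHom hd₂ (ZMod q₂) x₂ = 1)
    (hx₂₃ : ZMod.castHom hd₃ (ZMod q₃) x₂ = -1)
    (hx₃₁ : ZMod.castHom hd₁ (ZMod q₁) x₃ = -1)
    (hx₃₂ : ZMod.castHom hd₂ (ZMod q₂) x₃ = -1)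
    (hx₃₃ : ZMod.castHom hd₃ (ZMod q₃) x₃ = 1) :
    ∃ H : Subgroup (SpecialLinearGroup (Fin 2) (ZMod N)),
      (∀ g : SpecialLinearGroup (Fin 2) (ZMod N),
        g ∈ H ↔ (g : Matrix (Fin 2) (Fin 2) (ZMod N)) ∈
          ({1, x₁ • 1, x₂ • 1, x₃ • 1} : Set (Matrix (Fin 2) (Fin 2) (ZMod N)))) ∧
      Nonempty (H ≃* Multiplicative (ZMod 2 × ZMod 2)) ∧
      ∀ g ∈ H, ∃ (ℓ : ℕ) (_ : ℓ.Prime) (hd : ℓ ∣ N),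
        SpecialLinearGroup.map (ZMod.castHom hd (ZMod ℓ)) g = 1 := by
  haveI F₁ : Fact (2 < q₁) := ⟨h₁⟩
  haveI F₂ : Fact (2 < q₂) := ⟨h₂⟩
  haveI F₃ : Fact (2 < q₃) := ⟨h₃⟩
  have hNpos : 0 < N := by
    rw [hN]; exact Nat.mul_pos (Nat.mul_pos (by omega) (by omega)) (by omega)
  have inj := fun {a b : ZMod N} => crt_inj_aux hN h₁₂ h₁₃ h₂₃ hNpos hd₁ hd₂ hd₃ (a := a) (b := b)
  -- squares and products
  have hsq₁ : x₁ * x₁ = 1 := inj (by rw [_root_.map_mul, _root_.map_one, hx₁₁]; ring)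
    (by rw [_root_.map_mul, _root_.map_one, hx₁₂]; ring) (by rw [_root_.map_mul, _root_.map_one, hx₁₃]; ring)
  have hsq₂ : x₂ * x₂ = 1 := inj (by rw [_root_.map_mul, _root_.map_one, hx₂₁]; ring)
    (by rw [_root_.map_mul, _root_.map_one, hx₂₂]; ring) (by rw [_root_.map_mul, _root_.map_one, hx₂₃]; ring)
  have hsq₃ : x₃ * x₃ = 1 := inj (by rw [_root_.map_mul, _root_.map_one, hx₃₁]; ring)
    (by rw [_root_.map_mul, _root_.map_one, hx₃₂]; ring) (by rw [_root_.map_mul, _root_.map_one, hx₃₃]; ring)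
  have hprod : x₁ * x₂ = x₃ := inj (by rw [_root_.map_mul, hx₁₁, hx₂₁, hx₃₁]; ring)
    (by rw [_root_.map_mul, hx₁₂, hx₂₂, hx₃₂]; ring) (by rw [_root_.map_mul, hx₁₃, hx₂₃, hx₃₃]; ring)
  -- distinctness
  have hne₁ : x₁ ≠ 1 := fun h => ZMod.neg_one_ne_one (n := q₂) (by rw [← hx₁₂, h, _root_.map_one])
  have hne₂ : x₂ ≠ 1 := fun h => ZMod.neg_one_ne_one (n := q₁) (by rw [← hx₂₁, h, _root_.map_one])
  have hne₃ : x₃ ≠ 1 := fun h => ZMod.neg_one_ne_one (n := q₁) (by rw [← hx₃₁, h, _root_.map_one])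
  -- the SL₂ elements
  set G := SpecialLinearGroup (Fin 2) (ZMod N)
  let s₁ : G := ⟨x₁ • 1, by rw [det_smul_one_aux, hsq₁]⟩
  let s₂ : G := ⟨x₂ • 1, by rw [det_smul_one_aux, hsq₂]⟩
  let s₃ : G := ⟨x₃ • 1, by rw [det_smul_one_aux, hsq₃]⟩
  have hs₁s₂ : s₁ * s₂ = s₃ := Subtype.ext (by
    show (x₁ • 1 : Matrix (Fin 2) (Fin 2) (ZMod N)) * (x₂ • 1) = x₃ • 1
    rw [smul_one_mul_smul_one_aux, hprod])
  have hss₁ : s₁ * s₁ = 1 := Subtype.ext (by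
    show (x₁ • 1 : Matrix (Fin 2) (Fin 2) (ZMod N)) * (x₁ • 1) = 1
    rw [smul_one_mul_smul_one_aux, hsq₁, one_smul])
  have hss₂ : s₂ * s₂ = 1 := Subtype.ext (by
    show (x₂ • 1 : Matrix (Fin 2) (Fin 2) (ZMod N)) * (x₂ • 1) = 1
    rw [smul_one_mul_smul_one_aux, hsq₂, one_smul])
  have hcomm : Commute s₂ s₁ := by
    unfold s₁ s₂
    exact Subtype.ext (by
      show (x₂ • 1 : Matrix (Fin 2) (Fin 2) (ZMod N)) * (x₁ • 1) = (x₁ • 1) * (x₂ • 1)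
      rw [smul_one_mul_smul_one_aux, smul_one_mul_smul_one_aux, mul_comm])
  have h2 : ∀ a : ZMod 2, a = 0 ∨ a = 1 := by decide
  have key : ∀ (s : G), s * s = 1 → ∀ a b : ZMod 2,
      s ^ (a + b).val = s ^ a.val * s ^ b.val := by
    intro s hs a b
    rcases h2 a with rfl | rfl <;> rcases h2 b with rfl | rfl <;>
      simp [show ((0 : ZMod 2) + 0).val = 0 from rfl, show ((0 : ZMod 2) + 1).val = 1 from rfl,
        show ((1 : ZMod 2) + 0).val = 1 from rfl, show ((1 : ZMod 2) + 1).val = 0 from rfl,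
        show ((0 : ZMod 2)).val = 0 from rfl, show ((1 : ZMod 2)).val = 1 from rfl, hs]
  let f : Multiplicative (ZMod 2 × ZMod 2) → G :=
    fun p => s₁ ^ (p.toAdd.1.val) * s₂ ^ (p.toAdd.2.val)
  have hmul : ∀ p q, f (p * q) = f p * f q := by
    intro p q
    show s₁ ^ ((p.toAdd.1 + q.toAdd.1).val) * s₂ ^ ((p.toAdd.2 + q.toAdd.2).val) = _
    rw [key s₁ hss₁, key s₂ hss₂]
    exact (Commute.mul_mul_mul_comm (hcomm.pow_pow _ _) _ _).symm
  let φ : Multiplicative (ZMod 2 × ZMod 2) →* G := MonoidHom.mk' f hmul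
  have hval : ∀ p : ZMod 2 × ZMod 2, φ (Multiplicative.ofAdd p) = s₁ ^ p.1.val * s₂ ^ p.2.val :=
    fun p => rfl
  have hφ00 : φ (Multiplicative.ofAdd (0, 0)) = 1 := by
    rw [hval]; simp [show ((0 : ZMod 2)).val = 0 from rfl]
  have hφ10 : φ (Multiplicative.ofAdd (1, 0)) = s₁ := by
    rw [hval]; simp [show ((0 : ZMod 2)).val = 0 from rfl, show ((1 : ZMod 2)).val = 1 from rfl]
  have hφ01 : φ (Multiplicative.ofAdd (0, 1)) = s₂ := by
    rw [hval]; simp [show ((0 : ZMod 2)).val = 0 from rfl, show ((1 : ZMod 2)).val = 1 from rfl]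
  have hφ11 : φ (Multiplicative.ofAdd (1, 1)) = s₃ := by
    rw [hval]; simp only [show ((1 : ZMod 2)).val = 1 from rfl, pow_one]; exact hs₁s₂
  have hs₁ne : s₁ ≠ 1 := fun h => hne₁ (smul_one_inj_aux (by
    have := congrArg Subtype.val h
    simpa [one_smul] using this))
  have hs₂ne : s₂ ≠ 1 := fun h => hne₂ (smul_one_inj_aux (by
    have := congrArg Subtype.val h
    simpa [one_smul] using this))
  have hs₃ne : s₃ ≠ 1 := fun h => hne₃ (smul_one_inj_aux (by
    have := congrArg Subtype.val h
    simpa [one_smul] using this))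
  have hinj : Function.Injective φ := by
    rw [injective_iff_map_eq_one]
    intro p hp
    have hp' : p = Multiplicative.ofAdd ((Multiplicative.toAdd p).1, (Multiplicative.toAdd p).2) :=
      rfl
    rcases h2 (Multiplicative.toAdd p).1 with ha | ha <;>
      rcases h2 (Multiplicative.toAdd p).2 with hb | hb <;> rw [ha, hb] at hp'
    · rw [hp']; rfl
    · rw [hp', hφ01] at hp; exact absurd hp hs₂ne
    · rw [hp', hφ10] at hp; exact absurd hp hs₁ne
    · rw [hp', hφ11] at hp; exact absurd hp hs₃ne
  refine ⟨φ.range, ?_, ⟨(MonoidHom.ofInjective hinj).symm⟩, ?_⟩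
  · intro g
    constructor
    · rintro ⟨p, rfl⟩
      have hp' : p = Multiplicative.ofAdd ((Multiplicative.toAdd p).1, (Multiplicative.toAdd p).2) :=
        rfl
      rcases h2 (Multiplicative.toAdd p).1 with ha | ha <;>
        rcases h2 (Multiplicative.toAdd p).2 with hb | hb <;> rw [ha, hb] at hp'
      · rw [hp', hφ00]; exact Set.mem_insert _ _
      · rw [hp', hφ01]; exact Set.mem_insert_of_mem _ (Set.mem_insert_of_mem _ (Set.mem_insert _ _))
      · rw [hp', hφ10]; exact Set.mem_insert_of_mem _ (Set.mem_insert _ _)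
      · rw [hp', hφ11]
        exact Set.mem_insert_of_mem _ (Set.mem_insert_of_mem _ (Set.mem_insert_of_mem _ rfl))
    · intro hg
      rcases hg with hg | hg | hg | hg
      · exact ⟨Multiplicative.ofAdd (0, 0), by rw [hφ00]; exact (Subtype.ext hg).symm⟩
      · exact ⟨Multiplicative.ofAdd (1, 0), by rw [hφ10]; exact (Subtype.ext hg).symm⟩
      · exact ⟨Multiplicative.ofAdd (0, 1), by rw [hφ01]; exact (Subtype.ext hg).symm⟩
      · exact ⟨Multiplicative.ofAdd (1, 1), by
          rw [hφ11]; exact (Subtype.ext (Set.eq_of_mem_singleton hg)).symm⟩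
  · -- reduction modulo a prime
    have hmapscal : ∀ (x : ZMod N) (hdet : (x • (1 : Matrix (Fin 2) (Fin 2) (ZMod N))).det = 1)
        (q ℓ : ℕ) (hqd : q ∣ N) (hlq : ℓ ∣ q) (hld : ℓ ∣ N),
        ZMod.castHom hqd (ZMod q) x = 1 →
        SpecialLinearGroup.map (ZMod.castHom hld (ZMod ℓ)) ⟨x • 1, hdet⟩ = 1 := by
      intro x hdet q ℓ hqd hlq hld hx
      apply Subtype.ext
      show (x • (1 : Matrix (Fin 2) (Fin 2) (ZMod N))).map (ZMod.castHom hld (ZMod ℓ)) = 1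
      rw [smul_one_map_aux]
      have hcast : ZMod.castHom hld (ZMod ℓ) x = 1 := by
        have := ZMod.castHom_comp hlq hqd
        have h2 : ZMod.castHom hld (ZMod ℓ) x =
            (ZMod.castHom hlq (ZMod ℓ)).comp (ZMod.castHom hqd (ZMod q)) x := by
          rw [this]
        rw [h2, RingHom.comp_apply, hx, _root_.map_one]
      rw [hcast, one_smul]
    intro g hg
    obtain ⟨ℓ₁, hp₁, hl₁⟩ := Nat.exists_prime_and_dvd (show q₁ ≠ 1 by omega)
    obtain ⟨ℓ₂, hp₂, hl₂⟩ := Nat.exists_prime_and_dvd (show q₂ ≠ 1 by omega)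
    obtain ⟨ℓ₃, hp₃, hl₃⟩ := Nat.exists_prime_and_dvd (show q₃ ≠ 1 by omega)
    rcases hg with ⟨p, rfl⟩
    have hp' : p = Multiplicative.ofAdd ((Multiplicative.toAdd p).1, (Multiplicative.toAdd p).2) :=
      rfl
    rcases h2 (Multiplicative.toAdd p).1 with ha | ha <;>
      rcases h2 (Multiplicative.toAdd p).2 with hb | hb <;> rw [ha, hb] at hp'
    · refine ⟨ℓ₁, hp₁, hl₁.trans hd₁, ?_⟩
      rw [hp', hφ00, _root_.map_one]
    · refine ⟨ℓ₂, hp₂, hl₂.trans hd₂, ?_⟩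
      rw [hp', hφ01]
      exact hmapscal x₂ _ q₂ ℓ₂ hd₂ hl₂ _ hx₂₂
    · refine ⟨ℓ₁, hp₁, hl₁.trans hd₁, ?_⟩
      rw [hp', hφ10]
      exact hmapscal x₁ _ q₁ ℓ₁ hd₁ hl₁ _ hx₁₁
    · refine ⟨ℓ₃, hp₃, hl₃.trans hd₃, ?_⟩
      rw [hp', hφ11]
      exact hmapscal x₃ _ q₃ ℓ₃ hd₃ hl₃ _ hx₃₃
end

section
/- Let α ≥ 1 be an integer and q₁, q₂ coprime odd integers, each greater than 1, and set N = 2^α q₁ q₂. Let r ∈ ℤ/Nℤ satisfy r ≡ 1 (mod 2^α), r ≡ 1 (mod q₁), r ≡ −1 (mod q₂), and let b = 2^{α−1} q₁ q₂ ∈ ℤ/Nℤ. Then the set H = { [[1,0],[0,1]], [[−1,0],[0,−1]], [[r,b],[0,r]], [[−r,b],[0,−r]] } is a subgroup of SL₂(ℤ/Nℤ) isomorphic to (ℤ/2ℤ)², and for every h ∈ H there exists a prime ℓ dividing N with π_ℓ(h) = 1, i.e. H = ⋃_{ℓ prime, ℓ | N} H_ℓ. -/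
private lemma matrix_ext_aux {R : Type*} (a b c d e f g h : R)
    (h1 : a = e) (h2 : b = f) (h3 : c = g) (h4 : d = h) :
    !![a, b; c, d] = !![e, f; g, h] := by
  subst h1 h2 h3 h4; rfl

open Matrix in
set_option maxHeartbeats 1000000 in
/-- Let `α ≥ 1`, let `q₁, q₂ > 1` be coprime odd integers, and
`N = 2^α q₁ q₂`. Let `r ∈ ℤ/Nℤ` satisfy `r ≡ 1 (mod 2^α)`, `r ≡ 1 (mod q₁)`,
`r ≡ -1 (mod q₂)`, and let `b = 2^(α-1) q₁ q₂ ∈ ℤ/Nℤ`. Then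
`H = {[[1,0],[0,1]], [[-1,0],[0,-1]], [[r,b],[0,r]], [[-r,b],[0,-r]]}` is a subgroup of
`SL₂(ℤ/Nℤ)` isomorphic to `(ℤ/2ℤ)²`, and every element of `H` reduces to the identity modulo
some prime `ℓ ∣ N`. -/
theorem stmt_6 (α q₁ q₂ : ℕ) (hα : 1 ≤ α) (hq₁ : 1 < q₁) (hq₂ : 1 < q₂)
    (hodd₁ : Odd q₁) (hodd₂ : Odd q₂) (hcop : Nat.Coprime q₁ q₂)
    (N : ℕ) (hN : N = 2 ^ α * q₁ * q₂)
    (hd₀ : 2 ^ α ∣ N) (hd₁ : q₁ ∣ N) (hd₂ : q₂ ∣ N)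
    (r b : ZMod N)
    (hr₀ : ZMod.castHom hd₀ (ZMod (2 ^ α)) r = 1)
    (hr₁ : ZMod.castHom hd₁ (ZMod q₁) r = 1)
    (hr₂ : ZMod.castHom hd₂ (ZMod q₂) r = -1)
    (hb : b = ((2 ^ (α - 1) * q₁ * q₂ : ℕ) : ZMod N)) :
    ∃ H : Subgroup (SpecialLinearGroup (Fin 2) (ZMod N)),
      (∀ g : SpecialLinearGroup (Fin 2) (ZMod N),
        g ∈ H ↔ (g : Matrix (Fin 2) (Fin 2) (ZMod N)) ∈
          ({!![1, 0; 0, 1], !![-1, 0; 0, -1], !![r, b; 0, r], !![-r, b; 0, -r]} :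
            Set (Matrix (Fin 2) (Fin 2) (ZMod N)))) ∧
      Nonempty (H ≃* Multiplicative (ZMod 2 × ZMod 2)) ∧
      ∀ g ∈ H, ∃ (ℓ : ℕ) (_ : ℓ.Prime) (hd : ℓ ∣ N),
        SpecialLinearGroup.map (ZMod.castHom hd (ZMod ℓ)) g = 1 := by
  have hq₁3 : 3 ≤ q₁ := by rcases hodd₁ with ⟨k, hk⟩; omega
  have hq₂3 : 3 ≤ q₂ := by rcases hodd₂ with ⟨k, hk⟩; omega
  have hα2 : 2 ≤ 2 ^ α := by
    calc 2 = 2 ^ 1 := rfl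
    _ ≤ 2 ^ α := Nat.pow_le_pow_right (by norm_num) hα
  have hNpos : 0 < N := by subst hN; positivity
  haveI : NeZero N := ⟨hNpos.ne'⟩
  haveI : NeZero q₁ := ⟨by omega⟩
  haveI : NeZero q₂ := ⟨by omega⟩
  have hcop01 : Nat.Coprime (2 ^ α) q₁ := (Nat.coprime_two_left.mpr hodd₁).pow_left α
  have hcop02 : Nat.Coprime (2 ^ α) q₂ := (Nat.coprime_two_left.mpr hodd₂).pow_left α
  -- CRT-style injectivity
  have key : ∀ x : ZMod N, ZMod.castHom hd₀ (ZMod (2 ^ α)) x = 0 →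
      ZMod.castHom hd₁ (ZMod q₁) x = 0 → ZMod.castHom hd₂ (ZMod q₂) x = 0 → x = 0 := by
    intro x h0 h1 h2
    have hv : ∀ (m : ℕ) (hd : m ∣ N), ZMod.castHom hd (ZMod m) x = ((x.val : ℕ) : ZMod m) := by
      intro m hd
      rw [ZMod.castHom_apply, ← ZMod.natCast_val]
    rw [hv _ hd₀, ZMod.natCast_eq_zero_iff] at h0
    rw [hv _ hd₁, ZMod.natCast_eq_zero_iff] at h1
    rw [hv _ hd₂, ZMod.natCast_eq_zero_iff] at h2
    have hdN : N ∣ x.val := by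
      have : 2 ^ α * q₁ * q₂ ∣ x.val := Nat.Coprime.mul_dvd_of_dvd_of_dvd (hcop02.mul hcop)
        (Nat.Coprime.mul_dvd_of_dvd_of_dvd hcop01 h0 h1) h2
      rwa [← hN] at this
    have := ZMod.val_lt x
    have : x.val = 0 := Nat.eq_zero_of_dvd_of_lt hdN this
    exact (ZMod.val_eq_zero x).mp this
  -- key algebraic facts
  have hr2 : r * r = 1 := by
    have : r * r - 1 = 0 := by
      apply key <;> simp only [map_sub, _root_.map_mul, _root_.map_one, hr₀, hr₁, hr₂] <;> ring
    linear_combination this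
  have h2b : (2 : ZMod N) * b = 0 := by
    have hnat : 2 * (2 ^ (α - 1) * q₁ * q₂) = N := by
      rw [hN, ← mul_assoc, ← mul_assoc, ← pow_succ', Nat.sub_add_cancel hα]
    calc (2 : ZMod N) * b = ((2 * (2 ^ (α - 1) * q₁ * q₂) : ℕ) : ZMod N) := by
          rw [hb]; push_cast; ring
      _ = ((N : ℕ) : ZMod N) := by rw [hnat]
      _ = 0 := ZMod.natCast_self N
  have hnegb : -b = b := by linear_combination -h2b
  -- distinctness facts
  have h1q : (1 : ZMod q₁) ≠ -1 := by
    intro h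
    have h2 : ((2 : ℕ) : ZMod q₁) = 0 := by push_cast; linear_combination h
    rw [ZMod.natCast_eq_zero_iff] at h2
    have := Nat.le_of_dvd (by norm_num) h2
    omega
  have hb0 : b ≠ 0 := by
    intro h
    rw [hb, ZMod.natCast_eq_zero_iff] at h
    have hle := Nat.le_of_dvd (by positivity) h
    have hlt : 2 ^ (α - 1) * q₁ * q₂ < N := by
      rw [hN]
      have h' : 2 ^ (α - 1) < 2 ^ α := Nat.pow_lt_pow_right (by norm_num) (by omega)
      exact (Nat.mul_lt_mul_right (by omega)).mpr ((Nat.mul_lt_mul_right (by omega)).mpr h')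
    omega
  have h1neg : (1 : ZMod N) ≠ -1 := by
    intro h
    apply h1q
    have := congrArg (ZMod.castHom hd₁ (ZMod q₁)) h
    rw [_root_.map_one, map_neg, _root_.map_one] at this
    exact this
  have hrne : r ≠ -r := by
    intro h
    apply h1q
    have := congrArg (ZMod.castHom hd₁ (ZMod q₁)) h
    rw [map_neg, hr₁] at this
    exact this
  -- determinants
  have detu : (!![r, b; 0, r] : Matrix (Fin 2) (Fin 2) (ZMod N)).det = 1 := by
    rw [Matrix.det_fin_two_of]; linear_combination hr2
  have detv : (!![-1, 0; 0, -1] : Matrix (Fin 2) (Fin 2) (ZMod N)).det = 1 := by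
    rw [Matrix.det_fin_two_of]; ring
  have detw : (!![-r, b; 0, -r] : Matrix (Fin 2) (Fin 2) (ZMod N)).det = 1 := by
    rw [Matrix.det_fin_two_of]; linear_combination hr2
  set u : SpecialLinearGroup (Fin 2) (ZMod N) := ⟨_, detu⟩ with hu
  set v : SpecialLinearGroup (Fin 2) (ZMod N) := ⟨_, detv⟩ with hv
  set w : SpecialLinearGroup (Fin 2) (ZMod N) := ⟨_, detw⟩ with hw
  have coe_one : ((1 : SpecialLinearGroup (Fin 2) (ZMod N)) : Matrix (Fin 2) (Fin 2) (ZMod N))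
      = !![1, 0; 0, 1] := by
    ext i j; fin_cases i <;> fin_cases j <;> simp [SpecialLinearGroup.coe_one]
  -- multiplication table
  have mvv : v * v = 1 := by
    apply Subtype.ext
    show (!![-1, 0; 0, -1] : Matrix (Fin 2) (Fin 2) (ZMod N)) * !![-1, 0; 0, -1] = _
    rw [Matrix.mul_fin_two, coe_one]
    exact matrix_ext_aux _ _ _ _ _ _ _ _ (by ring) (by ring) (by ring) (by ring)
  have muu : u * u = 1 := by
    apply Subtype.ext
    show (!![r, b; 0, r] : Matrix (Fin 2) (Fin 2) (ZMod N)) * !![r, b; 0, r] = _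
    rw [Matrix.mul_fin_two, coe_one]
    exact matrix_ext_aux _ _ _ _ _ _ _ _ (by linear_combination hr2)
      (by linear_combination r * h2b) (by ring) (by linear_combination hr2)
  have mww : w * w = 1 := by
    apply Subtype.ext
    show (!![-r, b; 0, -r] : Matrix (Fin 2) (Fin 2) (ZMod N)) * !![-r, b; 0, -r] = _
    rw [Matrix.mul_fin_two, coe_one]
    exact matrix_ext_aux _ _ _ _ _ _ _ _ (by linear_combination hr2)
      (by linear_combination (-r) * h2b) (by ring) (by linear_combination hr2)
  have muv : u * v = w := by
    apply Subtype.ext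
    show (!![r, b; 0, r] : Matrix (Fin 2) (Fin 2) (ZMod N)) * !![-1, 0; 0, -1] = !![-r, b; 0, -r]
    rw [Matrix.mul_fin_two]
    exact matrix_ext_aux _ _ _ _ _ _ _ _ (by ring) (by linear_combination -h2b)
      (by ring) (by ring)
  have mvu : v * u = w := by
    apply Subtype.ext
    show (!![-1, 0; 0, -1] : Matrix (Fin 2) (Fin 2) (ZMod N)) * !![r, b; 0, r] = !![-r, b; 0, -r]
    rw [Matrix.mul_fin_two]
    exact matrix_ext_aux _ _ _ _ _ _ _ _ (by ring) (by linear_combination -h2b)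
      (by ring) (by ring)
  have muw : u * w = v := by
    apply Subtype.ext
    show (!![r, b; 0, r] : Matrix (Fin 2) (Fin 2) (ZMod N)) * !![-r, b; 0, -r] = !![-1, 0; 0, -1]
    rw [Matrix.mul_fin_two]
    exact matrix_ext_aux _ _ _ _ _ _ _ _ (by linear_combination -hr2)
      (by ring) (by ring) (by linear_combination -hr2)
  have mwu : w * u = v := by
    apply Subtype.ext
    show (!![-r, b; 0, -r] : Matrix (Fin 2) (Fin 2) (ZMod N)) * !![r, b; 0, r] = !![-1, 0; 0, -1]
    rw [Matrix.mul_fin_two]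
    exact matrix_ext_aux _ _ _ _ _ _ _ _ (by linear_combination -hr2)
      (by ring) (by ring) (by linear_combination -hr2)
  have mvw : v * w = u := by
    apply Subtype.ext
    show (!![-1, 0; 0, -1] : Matrix (Fin 2) (Fin 2) (ZMod N)) * !![-r, b; 0, -r] = !![r, b; 0, r]
    rw [Matrix.mul_fin_two]
    exact matrix_ext_aux _ _ _ _ _ _ _ _ (by ring) (by linear_combination -h2b)
      (by ring) (by ring)
  have mwv : w * v = u := by
    apply Subtype.ext
    show (!![-r, b; 0, -r] : Matrix (Fin 2) (Fin 2) (ZMod N)) * !![-1, 0; 0, -1] = !![r, b; 0, r]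
    rw [Matrix.mul_fin_two]
    exact matrix_ext_aux _ _ _ _ _ _ _ _ (by ring) (by linear_combination -h2b)
      (by ring) (by ring)
  -- distinctness of the four elements
  have huv : u ≠ v := by
    intro h
    have := congrFun (congrFun (congrArg Subtype.val h) 0) 1
    simp [u, v] at this
    exact hb0 this
  have hu1 : u ≠ 1 := by
    intro h
    have := congrFun (congrFun (congrArg Subtype.val h) 0) 1
    rw [coe_one] at this
    simp at this
    exact hb0 this
  have hw1 : w ≠ 1 := by
    intro h
    have := congrFun (congrFun (congrArg Subtype.val h) 0) 1
    rw [coe_one] at this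
    simp at this
    exact hb0 this
  have hwv : w ≠ v := by
    intro h
    have := congrFun (congrFun (congrArg Subtype.val h) 0) 1
    simp [w, v] at this
    exact hb0 this
  have hv1 : v ≠ 1 := by
    intro h
    have := congrFun (congrFun (congrArg Subtype.val h) 0) 0
    rw [coe_one] at this
    simp at this
    exact h1neg this.symm
  have huw : u ≠ w := by
    intro h
    have := congrFun (congrFun (congrArg Subtype.val h) 0) 0
    simp [u, w] at this
    exact hrne this
  -- the subgroup
  have hmul : ∀ {x y : SpecialLinearGroup (Fin 2) (ZMod N)},
      x ∈ ({1, v, u, w} : Set (SpecialLinearGroup (Fin 2) (ZMod N))) →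
      y ∈ ({1, v, u, w} : Set (SpecialLinearGroup (Fin 2) (ZMod N))) →
      x * y ∈ ({1, v, u, w} : Set (SpecialLinearGroup (Fin 2) (ZMod N))) := by
    rintro x y (rfl | rfl | rfl | rfl) (rfl | rfl | rfl | rfl) <;>
      simp only [one_mul, mul_one, mvv, muu, mww, muv, mvu, muw, mwu, mvw, mwv] <;>
      first
        | (left; rfl)
        | (right; left; rfl)
        | (right; right; left; rfl)
        | (right; right; right; rfl)
  have hinv : ∀ {x : SpecialLinearGroup (Fin 2) (ZMod N)},
      x ∈ ({1, v, u, w} : Set (SpecialLinearGroup (Fin 2) (ZMod N))) →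
      x⁻¹ ∈ ({1, v, u, w} : Set (SpecialLinearGroup (Fin 2) (ZMod N))) := by
    rintro x (rfl | rfl | rfl | rfl)
    · rw [inv_one]; left; rfl
    · rw [inv_eq_of_mul_eq_one_left mvv]; right; left; rfl
    · rw [inv_eq_of_mul_eq_one_left muu]; right; right; left; rfl
    · rw [inv_eq_of_mul_eq_one_left mww]; right; right; right; rfl
  let H' : Subgroup (SpecialLinearGroup (Fin 2) (ZMod N)) :=
    { carrier := {1, v, u, w}
      one_mem' := Or.inl rfl
      mul_mem' := hmul
      inv_mem' := hinv }
  have hmem : ∀ x : SpecialLinearGroup (Fin 2) (ZMod N),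
      x ∈ H' ↔ x ∈ ({1, v, u, w} : Set (SpecialLinearGroup (Fin 2) (ZMod N))) :=
    fun x => Iff.rfl
  refine ⟨H', ?_, ?_, ?_⟩
  · -- membership description
    intro g
    rw [hmem]
    constructor
    · rintro (rfl | rfl | rfl | rfl)
      · left; exact coe_one
      · right; left; rfl
      · right; right; left; rfl
      · right; right; right; rfl
    · rintro (h | h | h | h)
      · left; exact Subtype.ext (h.trans coe_one.symm)
      · right; left; exact Subtype.ext h
      · right; right; left; exact Subtype.ext h
      · right; right; right; exact Subtype.ext h
  · -- isomorphism with Klein four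
    have hsq : ∀ g : H',
        g * g = 1 := by
      rintro ⟨g, hg | hg | hg | hg⟩ <;> subst hg <;> apply Subtype.ext
      · show (1 : SpecialLinearGroup (Fin 2) (ZMod N)) * 1 = 1; simp
      · exact mvv
      · exact muu
      · exact mww
    have hcard : Nat.card H' = 4 := by
      rw [← SetLike.coe_sort_coe, Nat.card_coe_set_eq]
      show ({1, v, u, w} : Set (SpecialLinearGroup (Fin 2) (ZMod N))).ncard = 4
      rw [Set.ncard_insert_of_notMem (by
            simp only [Set.mem_insert_iff, Set.mem_singleton_iff]
            push_neg
            exact ⟨hv1.symm, hu1.symm, hw1.symm⟩)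
          ((Set.finite_singleton w).insert u |>.insert v),
        Set.ncard_insert_of_notMem (by
            simp only [Set.mem_insert_iff, Set.mem_singleton_iff]
            push_neg
            exact ⟨huv.symm, hwv.symm⟩)
          ((Set.finite_singleton w).insert u),
        Set.ncard_pair huw]
    have hexp : Monoid.exponent H' = 2 := by
      have hdvd : Monoid.exponent H' ∣ 2 :=
        Monoid.exponent_dvd_of_forall_pow_eq_one (fun g => by rw [pow_two]; exact hsq g)
      rcases (Nat.prime_two.eq_one_or_self_of_dvd _ hdvd) with h | h
      · exfalso
        have hpe := Monoid.pow_exponent_eq_one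
          (⟨v, (hmem v).mpr (by right; left; rfl)⟩ : H')
        rw [h, pow_one] at hpe
        exact hv1 (congrArg Subtype.val hpe)
      · exact h
    haveI : IsKleinFour H' := ⟨hcard, hexp⟩
    exact IsKleinFour.nonempty_mulEquiv
  · -- reduction mod primes
    have h2N : 2 ∣ N := dvd_trans (dvd_pow_self 2 (by omega : α ≠ 0)) hd₀
    rintro g (rfl | rfl | rfl | rfl)
    · exact ⟨2, Nat.prime_two, h2N, map_one _⟩
    · refine ⟨2, Nat.prime_two, h2N, ?_⟩
      apply Subtype.ext
      ext i j
      fin_cases i <;> fin_cases j <;>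
        simp [SpecialLinearGroup.map_apply_coe, RingHom.mapMatrix_apply, Matrix.map_apply,
          SpecialLinearGroup.coe_one, Matrix.one_apply, map_neg, _root_.map_one,
          show (-1 : ZMod 2) = 1 from by decide, -ZMod.castHom_apply] <;>
        simp [v, map_neg, _root_.map_one, show (-1 : ZMod 2) = 1 from by decide, -ZMod.castHom_apply]
    · refine ⟨q₁.minFac, Nat.minFac_prime (by omega), dvd_trans (Nat.minFac_dvd q₁) hd₁, ?_⟩
      haveI : NeZero q₁.minFac := ⟨(Nat.minFac_prime (by omega : q₁ ≠ 1)).ne_zero⟩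
      have hfr : ZMod.castHom (dvd_trans (Nat.minFac_dvd q₁) hd₁) (ZMod q₁.minFac) r = 1 := by
        rw [← ZMod.castHom_comp (Nat.minFac_dvd q₁) hd₁, RingHom.comp_apply, hr₁, _root_.map_one]
      have hfb : ZMod.castHom (dvd_trans (Nat.minFac_dvd q₁) hd₁) (ZMod q₁.minFac) b = 0 := by
        rw [hb, map_natCast, ZMod.natCast_eq_zero_iff]
        exact dvd_trans (Nat.minFac_dvd q₁) ⟨2 ^ (α - 1) * q₂, by ring⟩
      apply Subtype.ext
      ext i j
      fin_cases i <;> fin_cases j <;>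
        simp [SpecialLinearGroup.map_apply_coe, RingHom.mapMatrix_apply, Matrix.map_apply,
          SpecialLinearGroup.coe_one, Matrix.one_apply, map_neg, hfr, hfb, -ZMod.castHom_apply] <;>
        simp [u, map_neg, hfr, hfb, -ZMod.castHom_apply]
    · refine ⟨q₂.minFac, Nat.minFac_prime (by omega), dvd_trans (Nat.minFac_dvd q₂) hd₂, ?_⟩
      haveI : NeZero q₂.minFac := ⟨(Nat.minFac_prime (by omega : q₂ ≠ 1)).ne_zero⟩
      have hfr : ZMod.castHom (dvd_trans (Nat.minFac_dvd q₂) hd₂) (ZMod q₂.minFac) r = -1 := by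
        rw [← ZMod.castHom_comp (Nat.minFac_dvd q₂) hd₂, RingHom.comp_apply, hr₂, map_neg,
          _root_.map_one]
      have hfb : ZMod.castHom (dvd_trans (Nat.minFac_dvd q₂) hd₂) (ZMod q₂.minFac) b = 0 := by
        rw [hb, map_natCast, ZMod.natCast_eq_zero_iff]
        exact dvd_trans (Nat.minFac_dvd q₂) ⟨2 ^ (α - 1) * q₁, by ring⟩
      apply Subtype.ext
      ext i j
      fin_cases i <;> fin_cases j <;>
        simp [SpecialLinearGroup.map_apply_coe, RingHom.mapMatrix_apply, Matrix.map_apply,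
          SpecialLinearGroup.coe_one, Matrix.one_apply, map_neg, hfr, hfb, -ZMod.castHom_apply] <;>
        simp [w, map_neg, hfr, hfb, -ZMod.castHom_apply]
end

section
/- Let K = 𝔽₅(t), p(t) = t³ − t² + 2t, q(t) = 2t⁶ + t⁵ + t − 1, and let E : y² = x³ + p(t)x + q(t). The polynomial X² − 2 is irreducible over K; let L = K(s) with s² = 2, a degree-2 extension of K. Then the four affine points (−1, ±s(t³ − t² + 2t − 2)) and (−2t², ±2(t³ − 2t² + 2t + 1)) lie on E over L, each satisfies 3·P = O in the group E(L), and the 3-torsion subgroup {P ∈ E(L) : 3·P = O} has exactly 9 elements (i.e. all of the 3-torsion of E is rational over L). -/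
instance : Fact (Nat.Prime 5) := ⟨by norm_num⟩

set_option maxHeartbeats 4000000 in
open Classical in
open Polynomial in
/-- Over `K = 𝔽₅(t)`, with `p = t³ - t² + 2t`, `q = 2t⁶ + t⁵ + t - 1` and
`E : y² = x³ + p x + q`, the polynomial `X² - 2` is irreducible over `K`; and over any field
`L = K(s)` of degree `2` over `K` with `s² = 2`, the four points
`(-1, ±s(t³ - t² + 2t - 2))` and `(-2t², ±2(t³ - 2t² + 2t + 1))` lie on `E`, are killed by `3`,
and the `3`-torsion subgroup of `E(L)` has exactly `9` elements. -/
theorem stmt_15 (p q : RatFunc (ZMod 5))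
    (hp : p = RatFunc.X ^ 3 - RatFunc.X ^ 2 + 2 * RatFunc.X)
    (hq : q = 2 * RatFunc.X ^ 6 + RatFunc.X ^ 5 + RatFunc.X - 1) :
    Irreducible (X ^ 2 - C (2 : RatFunc (ZMod 5))) ∧
      ∀ (L : Type) [Field L] [Algebra (RatFunc (ZMod 5)) L],
        Module.finrank (RatFunc (ZMod 5)) L = 2 →
        ∀ s : L, s ^ 2 = 2 →
        ∀ (W : WeierstrassCurve.Affine L),
          W = ⟨0, 0, 0, algebraMap (RatFunc (ZMod 5)) L p, algebraMap (RatFunc (ZMod 5)) L q⟩ →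
        ∀ t : L, t = algebraMap (RatFunc (ZMod 5)) L RatFunc.X →
          ((∃ h : W.Nonsingular (-1) (s * (t ^ 3 - t ^ 2 + 2 * t - 2)),
              3 • (WeierstrassCurve.Affine.Point.some _ _ h) = 0) ∧
            (∃ h : W.Nonsingular (-1) (-(s * (t ^ 3 - t ^ 2 + 2 * t - 2))),
              3 • (WeierstrassCurve.Affine.Point.some _ _ h) = 0) ∧
            (∃ h : W.Nonsingular (-2 * t ^ 2) (2 * (t ^ 3 - 2 * t ^ 2 + 2 * t + 1)),
              3 • (WeierstrassCurve.Affine.Point.some _ _ h) = 0) ∧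
            (∃ h : W.Nonsingular (-2 * t ^ 2) (-(2 * (t ^ 3 - 2 * t ^ 2 + 2 * t + 1))),
              3 • (WeierstrassCurve.Affine.Point.some _ _ h) = 0) ∧
            Nat.card {P : W.Point // 3 • P = 0} = 9) := by
  -- `2` is not a square in `K = 𝔽₅(t)`
  have nsq : ∀ b : RatFunc (ZMod 5), b ^ 2 ≠ 2 := by
    intro b hb
    have hd : algebraMap (Polynomial (ZMod 5)) (RatFunc (ZMod 5)) b.denom ≠ 0 :=
      RatFunc.algebraMap_ne_zero b.denom_ne_zero
    have e : algebraMap (Polynomial (ZMod 5)) (RatFunc (ZMod 5)) b.num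
        = b * algebraMap (Polynomial (ZMod 5)) (RatFunc (ZMod 5)) b.denom :=
      (div_eq_iff hd).mp (RatFunc.num_div_denom b)
    have hpoly : b.num ^ 2 = Polynomial.C 2 * b.denom ^ 2 := by
      apply IsFractionRing.injective (Polynomial (ZMod 5)) (RatFunc (ZMod 5))
      rw [map_pow, map_mul, map_pow, e]
      rw [show (algebraMap (Polynomial (ZMod 5)) (RatFunc (ZMod 5))) (Polynomial.C 2)
        = (2 : RatFunc (ZMod 5)) from by rw [map_ofNat Polynomial.C 2, map_ofNat]]
      linear_combination
        ((algebraMap (Polynomial (ZMod 5)) (RatFunc (ZMod 5))) b.denom) ^ 2 * hb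
    have hlc := congrArg Polynomial.leadingCoeff hpoly
    rw [Polynomial.leadingCoeff_pow, Polynomial.leadingCoeff_mul, Polynomial.leadingCoeff_pow,
      Polynomial.leadingCoeff_C] at hlc
    have hden0 : b.denom.leadingCoeff ≠ 0 :=
      Polynomial.leadingCoeff_ne_zero.mpr b.denom_ne_zero
    exact (by decide : ∀ a c : ZMod 5, c ≠ 0 → a ^ 2 ≠ 2 * c ^ 2) _ _ hden0 hlc
  constructor
  · exact X_pow_sub_C_irreducible_of_prime Nat.prime_two fun b => nsq b
  intro L _ _ _ s hs W hW t ht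
  
  -- notation and basic facts about `L`
  have hinjL : Function.Injective (algebraMap (RatFunc (ZMod 5)) L) :=
    (algebraMap (RatFunc (ZMod 5)) L).injective
  have h5K : (5 : RatFunc (ZMod 5)) = 0 := by
    rw [← Nat.cast_ofNat (R := RatFunc (ZMod 5)) (n := 5), ← map_natCast RatFunc.C 5,
      show ((5 : ℕ) : ZMod 5) = 0 from by decide, map_zero]
  have h5 : (5 : L) = 0 := by
    rw [← map_ofNat (algebraMap (RatFunc (ZMod 5)) L) 5, h5K, map_zero]
  have two_ne : (2 : L) ≠ 0 := by
    rw [← map_ofNat (algebraMap (RatFunc (ZMod 5)) L) 2]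
    intro hcon
    have h2K : (2 : RatFunc (ZMod 5)) = 0 := hinjL (by rw [hcon, map_zero])
    rw [← Nat.cast_ofNat (R := RatFunc (ZMod 5)) (n := 2), ← map_natCast RatFunc.C 2] at h2K
    have := (RingHom.injective (RatFunc.C (K := ZMod 5))) (by rw [h2K, map_zero] :
      RatFunc.C ((2 : ℕ) : ZMod 5) = RatFunc.C 0)
    revert this; decide
  have s_ne : s ≠ 0 := by
    intro h0
    exact two_ne (by rw [← hs, h0]; ring)
  have hne2 : ∀ z : L, z ≠ 0 → z ≠ -z := by
    intro z hz hcon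
    rcases mul_eq_zero.mp (show (2 : L) * z = 0 by linear_combination hcon) with h | h
    exacts [two_ne h, hz h]
  -- `a + b √2` is nonzero whenever `(a, b) ≠ 0` in `K`
  have helper : ∀ a b : RatFunc (ZMod 5), (a ≠ 0 ∨ b ≠ 0) →
      algebraMap (RatFunc (ZMod 5)) L a + algebraMap (RatFunc (ZMod 5)) L b * s ≠ 0 := by
    intro a b hab h0
    have hsq : a ^ 2 = 2 * b ^ 2 := by
      apply hinjL
      rw [map_pow, map_mul, map_pow, map_ofNat]
      linear_combination (algebraMap (RatFunc (ZMod 5)) L a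
        - algebraMap (RatFunc (ZMod 5)) L b * s) * h0
        + (algebraMap (RatFunc (ZMod 5)) L b) ^ 2 * hs
    rcases eq_or_ne b 0 with rfl | hb
    · have ha : a = 0 := by
        have : a ^ 2 = 0 := by rw [hsq]; ring
        exact pow_eq_zero_iff two_ne_zero |>.mp this
      rcases hab with h | h
      · exact h ha
      · exact h rfl
    · exact nsq (a / b) (by field_simp; linear_combination hsq)
  -- nonzero polynomials in `K`
  have polyne : ∀ P : Polynomial (ZMod 5), P.eval 0 ≠ 0 →
      algebraMap (Polynomial (ZMod 5)) (RatFunc (ZMod 5)) P ≠ 0 := by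
    intro P hP h
    apply hP
    rw [show P = 0 from IsFractionRing.injective (Polynomial (ZMod 5)) (RatFunc (ZMod 5))
      (by rw [h, map_zero])]
    simp
  have nz_u : (RatFunc.X ^ 3 - RatFunc.X ^ 2 + 2 * RatFunc.X - 2 : RatFunc (ZMod 5)) ≠ 0 := by
    rw [show (RatFunc.X ^ 3 - RatFunc.X ^ 2 + 2 * RatFunc.X - 2 : RatFunc (ZMod 5)) =
      algebraMap (Polynomial (ZMod 5)) (RatFunc (ZMod 5))
        (Polynomial.X ^ 3 - Polynomial.X ^ 2 + 2 * Polynomial.X - 2) from by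
      simp only [map_sub, map_add, map_mul, map_pow, map_ofNat, RatFunc.algebraMap_X]]
    exact polyne _ (by simp; decide)
  have nz_v : (RatFunc.X ^ 3 - 2 * RatFunc.X ^ 2 + 2 * RatFunc.X + 1 : RatFunc (ZMod 5)) ≠ 0 := by
    rw [show (RatFunc.X ^ 3 - 2 * RatFunc.X ^ 2 + 2 * RatFunc.X + 1 : RatFunc (ZMod 5)) =
      algebraMap (Polynomial (ZMod 5)) (RatFunc (ZMod 5))
        (Polynomial.X ^ 3 - 2 * Polynomial.X ^ 2 + 2 * Polynomial.X + 1) from by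
      simp only [map_sub, map_add, map_mul, map_pow, map_ofNat, map_one, RatFunc.algebraMap_X]]
    exact polyne _ (by simp)
  have nz_b3 : (4 * RatFunc.X ^ 2 + 3 * RatFunc.X + 3 : RatFunc (ZMod 5)) ≠ 0 := by
    rw [show (4 * RatFunc.X ^ 2 + 3 * RatFunc.X + 3 : RatFunc (ZMod 5)) =
      algebraMap (Polynomial (ZMod 5)) (RatFunc (ZMod 5))
        (4 * Polynomial.X ^ 2 + 3 * Polynomial.X + 3) from by
      simp only [map_add, map_mul, map_pow, map_ofNat, RatFunc.algebraMap_X]]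
    exact polyne _ (by simp; decide)
  have nz_d : (2 * RatFunc.X ^ 2 - 1 : RatFunc (ZMod 5)) ≠ 0 := by
    rw [show (2 * RatFunc.X ^ 2 - 1 : RatFunc (ZMod 5)) =
      algebraMap (Polynomial (ZMod 5)) (RatFunc (ZMod 5))
        (2 * Polynomial.X ^ 2 - 1) from by
      simp only [map_sub, map_mul, map_pow, map_ofNat, map_one, RatFunc.algebraMap_X]]
    exact polyne _ (by simp)
  -- nonvanishing facts in `L`
  have hu_t : (t ^ 3 - t ^ 2 + 2 * t - 2 : L) ≠ 0 := by
    rw [show (t ^ 3 - t ^ 2 + 2 * t - 2 : L) = algebraMap (RatFunc (ZMod 5)) L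
        (RatFunc.X ^ 3 - RatFunc.X ^ 2 + 2 * RatFunc.X - 2) from by
      rw [ht]; simp only [map_sub, map_add, map_mul, map_pow, map_ofNat]]
    exact fun h => nz_u (hinjL (by rw [h, map_zero]))
  have hv_t : (t ^ 3 - 2 * t ^ 2 + 2 * t + 1 : L) ≠ 0 := by
    rw [show (t ^ 3 - 2 * t ^ 2 + 2 * t + 1 : L) = algebraMap (RatFunc (ZMod 5)) L
        (RatFunc.X ^ 3 - 2 * RatFunc.X ^ 2 + 2 * RatFunc.X + 1) from by
      rw [ht]; simp only [map_sub, map_add, map_mul, map_pow, map_ofNat, map_one]]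
    exact fun h => nz_v (hinjL (by rw [h, map_zero]))
  have hy1ne0 : (s * (t ^ 3 - t ^ 2 + 2 * t - 2) : L) ≠ 0 := mul_ne_zero s_ne hu_t
  have hy2ne0 : (2 * (t ^ 3 - 2 * t ^ 2 + 2 * t + 1) : L) ≠ 0 := mul_ne_zero two_ne hv_t
  have hy3ne0 : (2 * t ^ 3 + 4 * t ^ 2 + 4 * t + (4 * t ^ 2 + 3 * t + 3) * s : L) ≠ 0 := by
    rw [show (2 * t ^ 3 + 4 * t ^ 2 + 4 * t + (4 * t ^ 2 + 3 * t + 3) * s : L) =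
        algebraMap (RatFunc (ZMod 5)) L (2 * RatFunc.X ^ 3 + 4 * RatFunc.X ^ 2 + 4 * RatFunc.X)
        + algebraMap (RatFunc (ZMod 5)) L (4 * RatFunc.X ^ 2 + 3 * RatFunc.X + 3) * s from by
      rw [ht]; simp only [map_add, map_mul, map_pow, map_ofNat]]
    exact helper _ _ (Or.inr nz_b3)
  have hy4ne0 : (3 * t ^ 3 + t ^ 2 + t + (4 * t ^ 2 + 3 * t + 3) * s : L) ≠ 0 := by
    rw [show (3 * t ^ 3 + t ^ 2 + t + (4 * t ^ 2 + 3 * t + 3) * s : L) =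
        algebraMap (RatFunc (ZMod 5)) L (3 * RatFunc.X ^ 3 + RatFunc.X ^ 2 + RatFunc.X)
        + algebraMap (RatFunc (ZMod 5)) L (4 * RatFunc.X ^ 2 + 3 * RatFunc.X + 3) * s from by
      rw [ht]; simp only [map_add, map_mul, map_pow, map_ofNat]]
    exact helper _ _ (Or.inr nz_b3)
  have hx12ne : (-1 : L) ≠ -2 * t ^ 2 := by
    intro hcon
    apply nz_d
    apply hinjL
    rw [map_zero, show algebraMap (RatFunc (ZMod 5)) L (2 * RatFunc.X ^ 2 - 1) =
        2 * t ^ 2 - 1 from by rw [ht]; simp only [map_sub, map_mul, map_pow, map_ofNat, map_one]]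
    linear_combination hcon
  -- Weierstrass coefficients
  have ha1 : W.a₁ = 0 := by rw [hW]
  have ha2 : W.a₂ = 0 := by rw [hW]
  have ha3 : W.a₃ = 0 := by rw [hW]
  have ha4 : W.a₄ = t ^ 3 - t ^ 2 + 2 * t := by
    rw [hW]
    show algebraMap (RatFunc (ZMod 5)) L p = _
    rw [hp, ht]; simp only [map_sub, map_add, map_mul, map_pow, map_ofNat]
  have ha6 : W.a₆ = 2 * t ^ 6 + t ^ 5 + t - 1 := by
    rw [hW]
    show algebraMap (RatFunc (ZMod 5)) L q = _
    rw [hq, ht]; simp only [map_sub, map_add, map_mul, map_pow, map_ofNat, map_one]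
  have hneg : ∀ a b : L, W.negY a b = -b := by
    intro a b; simp only [WeierstrassCurve.Affine.negY, ha1, ha3]; ring
  have haddX : ∀ a b l : L, W.addX a b l = l ^ 2 - a - b := by
    intro a b l; simp only [WeierstrassCurve.Affine.addX, ha1, ha2]; ring
  have haddY : ∀ a b c l : L, W.addY a b c l = -(l * (l ^ 2 - a - b - a) + c) := by
    intro a b c l
    simp only [WeierstrassCurve.Affine.addY, WeierstrassCurve.Affine.negAddY,
      WeierstrassCurve.Affine.addX, WeierstrassCurve.Affine.negY, ha1, ha2, ha3]
    ring
  -- the four basic points are nonsingular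
  have mkns : ∀ x y : L, y ≠ 0 → y ^ 2 = x ^ 3 + (t ^ 3 - t ^ 2 + 2 * t) * x
      + (2 * t ^ 6 + t ^ 5 + t - 1) → W.Nonsingular x y := by
    intro x y hy he
    refine (W.nonsingular_iff x y).mpr ⟨(W.equation_iff x y).mpr ?_, Or.inr ?_⟩
    · rw [ha1, ha2, ha3, ha4, ha6]; linear_combination he
    · rw [ha1, ha3]
      intro hcon
      exact hne2 y hy (by linear_combination hcon)
  have eq1 : (s * (t ^ 3 - t ^ 2 + 2 * t - 2)) ^ 2 = (-1 : L) ^ 3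
      + (t ^ 3 - t ^ 2 + 2 * t) * (-1) + (2 * t ^ 6 + t ^ 5 + t - 1) := by
    linear_combination (t^6 + (-2)*t^5 + (5)*t^4 + (-8)*t^3 + (8)*t^2 + (-8)*t + (4)) * hs + ((-1)*t^5 + (2)*t^4 + (-3)*t^3 + (3)*t^2 + (-3)*t + (2)) * h5
  have eq2 : (2 * (t ^ 3 - 2 * t ^ 2 + 2 * t + 1)) ^ 2 = (-2 * t ^ 2 : L) ^ 3
      + (t ^ 3 - t ^ 2 + 2 * t) * (-2 * t ^ 2) + (2 * t ^ 6 + t ^ 5 + t - 1) := by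
    linear_combination ((2)*t^6 + (-3)*t^5 + (6)*t^4 + (-4)*t^3 + (3)*t + (1)) * h5
  have eq3 : (2 * t ^ 3 + 4 * t ^ 2 + 4 * t + (4 * t ^ 2 + 3 * t + 3) * s) ^ 2
      = (t ^ 2 + 3 + (4 * t ^ 2 + 3 * t + 3) * s : L) ^ 3
      + (t ^ 3 - t ^ 2 + 2 * t) * (t ^ 2 + 3 + (4 * t ^ 2 + 3 * t + 3) * s)
      + (2 * t ^ 6 + t ^ 5 + t - 1) := by
    linear_combination ((-64)*s*t^6 + (-144)*s*t^5 + (-252)*s*t^4 + (-243)*s*t^3 + (-189)*s*t^2 + (-81)*s*t + (-27)*s + (-48)*t^6 + (-72)*t^5 + (-227)*t^4 + (-246)*t^3 + (-291)*t^2 + (-144)*t + (-72)) * hs + ((-28)*s*t^6 + (-57)*s*t^5 + (-108)*s*t^4 + (-96)*s*t^3 + (-99)*s*t^2 + (-45)*s*t + (-27)*s + (-19)*t^6 + (-26)*t^5 + (-86)*t^4 + (-93)*t^3 + (-118)*t^2 + (-59)*t + (-34)) * h5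
  have eq4 : (3 * t ^ 3 + t ^ 2 + t + (4 * t ^ 2 + 3 * t + 3) * s) ^ 2
      = (t ^ 2 + 3 + (t ^ 2 + 2 * t + 2) * s : L) ^ 3
      + (t ^ 3 - t ^ 2 + 2 * t) * (t ^ 2 + 3 + (t ^ 2 + 2 * t + 2) * s)
      + (2 * t ^ 6 + t ^ 5 + t - 1) := by
    linear_combination ((-1)*s*t^6 + (-6)*s*t^5 + (-18)*s*t^4 + (-32)*s*t^3 + (-36)*s*t^2 + (-24)*s*t + (-8)*s + (-3)*t^6 + (-12)*t^5 + (-17)*t^4 + (-36)*t^3 + (-51)*t^2 + (-54)*t + (-27)) * hs + ((-1)*s*t^6 + s*t^5 + (-7)*s*t^4 + (-14)*s*t^3 + (-25)*s*t^2 + (-20)*s*t + (-14)*s + (-4)*t^5 + (-7)*t^4 + (-15)*t^3 + (-25)*t^2 + (-23)*t + (-16)) * h5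
  have h1 : W.Nonsingular (-1) (s * (t ^ 3 - t ^ 2 + 2 * t - 2)) := mkns _ _ hy1ne0 eq1
  have h2 : W.Nonsingular (-2 * t ^ 2) (2 * (t ^ 3 - 2 * t ^ 2 + 2 * t + 1)) :=
    mkns _ _ hy2ne0 eq2
  have h3 : W.Nonsingular (t ^ 2 + 3 + (4 * t ^ 2 + 3 * t + 3) * s)
      (2 * t ^ 3 + 4 * t ^ 2 + 4 * t + (4 * t ^ 2 + 3 * t + 3) * s) := mkns _ _ hy3ne0 eq3
  have h4 : W.Nonsingular (t ^ 2 + 3 + (t ^ 2 + 2 * t + 2) * s)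
      (3 * t ^ 3 + t ^ 2 + t + (4 * t ^ 2 + 3 * t + 3) * s) := mkns _ _ hy4ne0 eq4
  
  have h1' : W.Nonsingular (-1) (-(s * (t ^ 3 - t ^ 2 + 2 * t - 2))) :=
    mkns _ _ (neg_ne_zero.mpr hy1ne0) (by linear_combination (t^6 + (-2)*t^5 + (5)*t^4 + (-8)*t^3 + (8)*t^2 + (-8)*t + (4)) * hs + ((-1)*t^5 + (2)*t^4 + (-3)*t^3 + (3)*t^2 + (-3)*t + (2)) * h5)
  have h2' : W.Nonsingular (-2 * t ^ 2) (-(2 * (t ^ 3 - 2 * t ^ 2 + 2 * t + 1))) :=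
    mkns _ _ (neg_ne_zero.mpr hy2ne0) (by linear_combination ((2)*t^6 + (-3)*t^5 + (6)*t^4 + (-4)*t^3 + (3)*t + (1)) * h5)
  -- doubling of the two basic points
  have hy1' : s * (t ^ 3 - t ^ 2 + 2 * t - 2)
      ≠ W.negY (-1) (s * (t ^ 3 - t ^ 2 + 2 * t - 2)) := by
    rw [hneg]; exact hne2 _ hy1ne0
  have hden1 : s * (t ^ 3 - t ^ 2 + 2 * t - 2)
      - W.negY (-1) (s * (t ^ 3 - t ^ 2 + 2 * t - 2)) ≠ 0 := by
    rw [hneg, sub_neg_eq_add, ← two_mul]; exact mul_ne_zero two_ne hy1ne0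
  have hsl1 : W.slope (-1) (-1) (s * (t ^ 3 - t ^ 2 + 2 * t - 2))
      (s * (t ^ 3 - t ^ 2 + 2 * t - 2)) = 4 * s := by
    rw [WeierstrassCurve.Affine.slope_of_Y_ne rfl hy1', div_eq_iff hden1, hneg, ha1, ha2, ha4]
    linear_combination ((-8)*t^3 + (8)*t^2 + (-16)*t + (16)) * hs + ((-3)*t^3 + (3)*t^2 + (-6)*t + (7)) * h5
  have hdbl1 : WeierstrassCurve.Affine.Point.some _ _ h1 + WeierstrassCurve.Affine.Point.some _ _ h1
      = -WeierstrassCurve.Affine.Point.some _ _ h1 := by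
    rw [WeierstrassCurve.Affine.Point.add_self_of_Y_ne hy1',
      WeierstrassCurve.Affine.Point.neg_some]
    simp only [WeierstrassCurve.Affine.Point.some.injEq]
    refine ⟨?_, ?_⟩
    · rw [hsl1, haddX]; linear_combination ((16)) * hs + ((7)) * h5
    · rw [hsl1, haddY, hneg]; linear_combination ((-64)*s) * hs + ((-28)*s) * h5
  have hy2' : 2 * (t ^ 3 - 2 * t ^ 2 + 2 * t + 1)
      ≠ W.negY (-2 * t ^ 2) (2 * (t ^ 3 - 2 * t ^ 2 + 2 * t + 1)) := by
    rw [hneg]; exact hne2 _ hy2ne0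
  have hden2 : 2 * (t ^ 3 - 2 * t ^ 2 + 2 * t + 1)
      - W.negY (-2 * t ^ 2) (2 * (t ^ 3 - 2 * t ^ 2 + 2 * t + 1)) ≠ 0 := by
    rw [hneg, sub_neg_eq_add, ← two_mul]; exact mul_ne_zero two_ne hy2ne0
  have hsl2 : W.slope (-2 * t ^ 2) (-2 * t ^ 2) (2 * (t ^ 3 - 2 * t ^ 2 + 2 * t + 1))
      (2 * (t ^ 3 - 2 * t ^ 2 + 2 * t + 1)) = -(2 * t) := by
    rw [WeierstrassCurve.Affine.slope_of_Y_ne rfl hy2', div_eq_iff hden2, hneg, ha1, ha2, ha4]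
    linear_combination ((4)*t^4 + (-3)*t^3 + (3)*t^2 + (2)*t) * h5
  have hdbl2 : WeierstrassCurve.Affine.Point.some _ _ h2 + WeierstrassCurve.Affine.Point.some _ _ h2
      = -WeierstrassCurve.Affine.Point.some _ _ h2 := by
    rw [WeierstrassCurve.Affine.Point.add_self_of_Y_ne hy2',
      WeierstrassCurve.Affine.Point.neg_some]
    simp only [WeierstrassCurve.Affine.Point.some.injEq]
    refine ⟨?_, ?_⟩
    · rw [hsl2, haddX]; linear_combination ((2)*t^2) * h5
    · rw [hsl2, haddY, hneg]; linear_combination ((4)*t^3) * h5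
  -- triple of a point doubling to its negative is zero
  have tors : ∀ {x y : L} (h : W.Nonsingular x y),
      WeierstrassCurve.Affine.Point.some _ _ h + WeierstrassCurve.Affine.Point.some _ _ h
        = -WeierstrassCurve.Affine.Point.some _ _ h →
      3 • WeierstrassCurve.Affine.Point.some _ _ h = 0 := by
    intro x y h hd
    rw [show (3 : ℕ) = 2 + 1 from rfl, add_nsmul, two_nsmul, one_nsmul, hd, neg_add_cancel]
  have tor1 := tors h1 hdbl1
  have tor2 := tors h2 hdbl2
  have hneg1 : WeierstrassCurve.Affine.Point.some _ _ h1' = -WeierstrassCurve.Affine.Point.some _ _ h1 := by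
    rw [WeierstrassCurve.Affine.Point.neg_some]
    simp only [WeierstrassCurve.Affine.Point.some.injEq]
    refine ⟨trivial, ?_⟩
    rw [hneg]
  have hneg2 : WeierstrassCurve.Affine.Point.some _ _ h2' = -WeierstrassCurve.Affine.Point.some _ _ h2 := by
    rw [WeierstrassCurve.Affine.Point.neg_some]
    simp only [WeierstrassCurve.Affine.Point.some.injEq]
    refine ⟨trivial, ?_⟩
    rw [hneg]
  have tor1' : 3 • WeierstrassCurve.Affine.Point.some _ _ h1' = 0 := by
    rw [hneg1, smul_neg, tor1, neg_zero]
  have tor2' : 3 • WeierstrassCurve.Affine.Point.some _ _ h2' = 0 := by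
    rw [hneg2, smul_neg, tor2, neg_zero]
  -- sum and difference of the two basic points
  have hsl12 : W.slope (-1) (-2 * t ^ 2) (s * (t ^ 3 - t ^ 2 + 2 * t - 2))
      (2 * (t ^ 3 - 2 * t ^ 2 + 2 * t + 1)) = 3 * s * t - 3 * s - t + 2 := by
    rw [WeierstrassCurve.Affine.slope_of_X_ne hx12ne, div_eq_iff (sub_ne_zero.mpr hx12ne)]
    linear_combination ((-1)*s*t^3 + s*t^2 + s*t + (-1)*s + (-1)*t) * h5
  have hadd12 : WeierstrassCurve.Affine.Point.some _ _ h1 + WeierstrassCurve.Affine.Point.some _ _ h2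
      = WeierstrassCurve.Affine.Point.some _ _ h3 := by
    rw [WeierstrassCurve.Affine.Point.add_of_X_ne hx12ne]
    simp only [WeierstrassCurve.Affine.Point.some.injEq]
    refine ⟨?_, ?_⟩
    · rw [hsl12, haddX]; linear_combination ((9)*t^2 + (-18)*t + (9)) * hs + ((-2)*s*t^2 + (3)*s*t + (-3)*s + (4)*t^2 + (-8)*t + (4)) * h5
    · rw [hsl12, haddY]; linear_combination ((-27)*s*t^3 + (81)*s*t^2 + (-81)*s*t + (27)*s + (27)*t^3 + (-108)*t^2 + (135)*t + (-54)) * hs + ((-14)*s*t^3 + (42)*s*t^2 + (-49)*s*t + (19)*s + (11)*t^3 + (-46)*t^2 + (56)*t + (-24)) * h5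
  have hsl12' : W.slope (-1) (-2 * t ^ 2) (s * (t ^ 3 - t ^ 2 + 2 * t - 2))
      (W.negY (-2 * t ^ 2) (2 * (t ^ 3 - 2 * t ^ 2 + 2 * t + 1))) = 3 * s * t - 3 * s + t - 2 := by
    rw [WeierstrassCurve.Affine.slope_of_X_ne hx12ne, div_eq_iff (sub_ne_zero.mpr hx12ne), hneg]
    linear_combination ((-1)*s*t^3 + s*t^2 + s*t + (-1)*s + t) * h5
  have hsub12 : WeierstrassCurve.Affine.Point.some _ _ h1 + -WeierstrassCurve.Affine.Point.some _ _ h2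
      = WeierstrassCurve.Affine.Point.some _ _ h4 := by
    rw [WeierstrassCurve.Affine.Point.neg_some, WeierstrassCurve.Affine.Point.add_of_X_ne hx12ne]
    simp only [WeierstrassCurve.Affine.Point.some.injEq]
    refine ⟨?_, ?_⟩
    · rw [hsl12', haddX]; linear_combination ((9)*t^2 + (-18)*t + (9)) * hs + (s*t^2 + (-4)*s*t + (2)*s + (4)*t^2 + (-8)*t + (4)) * h5
    · rw [hsl12', haddY]; linear_combination ((-27)*s*t^3 + (81)*s*t^2 + (-81)*s*t + (27)*s + (-27)*t^3 + (108)*t^2 + (-135)*t + (54)) * hs + ((-14)*s*t^3 + (42)*s*t^2 + (-49)*s*t + (19)*s + (-12)*t^3 + (45)*t^2 + (-57)*t + (24)) * h5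
  
  -- basic distinctness facts
  have h12 : WeierstrassCurve.Affine.Point.some _ _ h1 ≠ WeierstrassCurve.Affine.Point.some _ _ h2 := by
    intro hcon
    exact hx12ne (WeierstrassCurve.Affine.Point.some.inj hcon).1
  have h12n : WeierstrassCurve.Affine.Point.some _ _ h1 ≠ -WeierstrassCurve.Affine.Point.some _ _ h2 := by
    rw [WeierstrassCurve.Affine.Point.neg_some]
    intro hcon
    exact hx12ne (WeierstrassCurve.Affine.Point.some.inj hcon).1
  -- arithmetic of natural multiples
  have key : ∀ m n : ℕ, m < 3 → n < 3 →
      m • WeierstrassCurve.Affine.Point.some _ _ h1 + n • WeierstrassCurve.Affine.Point.some _ _ h2 = 0 →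
      m = 0 ∧ n = 0 := by
    intro m n hm hn hmn
    interval_cases m <;> interval_cases n
    · exact ⟨rfl, rfl⟩
    · rw [zero_nsmul, one_nsmul, zero_add] at hmn
      exact absurd hmn (WeierstrassCurve.Affine.Point.some_ne_zero h2)
    · rw [zero_nsmul, two_nsmul, zero_add, hdbl2, neg_eq_zero] at hmn
      exact absurd hmn (WeierstrassCurve.Affine.Point.some_ne_zero h2)
    · rw [one_nsmul, zero_nsmul, add_zero] at hmn
      exact absurd hmn (WeierstrassCurve.Affine.Point.some_ne_zero h1)
    · rw [one_nsmul, one_nsmul] at hmn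
      exact absurd (eq_neg_of_add_eq_zero_left hmn) h12n
    · rw [one_nsmul, two_nsmul, hdbl2] at hmn
      exact absurd (add_neg_eq_zero.mp hmn) h12
    · rw [two_nsmul, zero_nsmul, add_zero, hdbl1, neg_eq_zero] at hmn
      exact absurd hmn (WeierstrassCurve.Affine.Point.some_ne_zero h1)
    · rw [two_nsmul, one_nsmul, hdbl1, neg_add_eq_zero] at hmn
      exact absurd hmn h12
    · rw [two_nsmul, two_nsmul, hdbl1, hdbl2, ← neg_add, neg_eq_zero] at hmn
      exact absurd (eq_neg_of_add_eq_zero_left hmn) h12n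
  have hmod : ∀ P : W.Point, 3 • P = 0 → ∀ k : ℕ, k • P = (k % 3) • P := by
    intro P hP k
    conv_lhs => rw [← Nat.div_add_mod k 3]
    rw [add_nsmul, mul_comm 3 (k / 3), ← smul_smul, hP, smul_zero, zero_add]
  have hadditive : ∀ P : W.Point, 3 • P = 0 → ∀ a b : ZMod 3,
      (a + b).val • P = a.val • P + b.val • P := by
    intro P hP a b
    rw [ZMod.val_add, ← hmod P hP, add_nsmul]
  have swap3 : ∀ (k : ℕ) (P : W.Point), 3 • P = 0 → (3 : ℕ) • (k • P) = 0 := by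
    intro k P hP
    rw [smul_smul, mul_comm, ← smul_smul, hP, smul_zero]
  have hmem : ∀ ab : ZMod 3 × ZMod 3,
      3 • (ab.1.val • WeierstrassCurve.Affine.Point.some _ _ h1
        + ab.2.val • WeierstrassCurve.Affine.Point.some _ _ h2) = 0 := by
    intro ab
    rw [smul_add, swap3 _ _ tor1, swap3 _ _ tor2, add_zero]
  have hval0 : ((0 : ZMod 3)).val = 0 := rfl
  have hval1 : ((1 : ZMod 3)).val = 1 := rfl
  have hval2 : ((2 : ZMod 3)).val = 2 := rfl
  have hbij : Function.Bijective (fun ab : ZMod 3 × ZMod 3 =>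
      (⟨ab.1.val • WeierstrassCurve.Affine.Point.some _ _ h1
        + ab.2.val • WeierstrassCurve.Affine.Point.some _ _ h2, hmem ab⟩
        : {P : W.Point // 3 • P = 0})) := by
    constructor
    · intro u v huv
      simp only [Subtype.mk.injEq] at huv
      have h1e : (u.1 - v.1).val • WeierstrassCurve.Affine.Point.some _ _ h1
          + v.1.val • WeierstrassCurve.Affine.Point.some _ _ h1
          = u.1.val • WeierstrassCurve.Affine.Point.some _ _ h1 := by
        rw [← hadditive _ tor1 (u.1 - v.1) v.1, sub_add_cancel]
      have h2e : (u.2 - v.2).val • WeierstrassCurve.Affine.Point.some _ _ h2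
          + v.2.val • WeierstrassCurve.Affine.Point.some _ _ h2
          = u.2.val • WeierstrassCurve.Affine.Point.some _ _ h2 := by
        rw [← hadditive _ tor2 (u.2 - v.2) v.2, sub_add_cancel]
      have hh : ((u.1 - v.1).val • WeierstrassCurve.Affine.Point.some _ _ h1
            + (u.2 - v.2).val • WeierstrassCurve.Affine.Point.some _ _ h2)
          + (v.1.val • WeierstrassCurve.Affine.Point.some _ _ h1
            + v.2.val • WeierstrassCurve.Affine.Point.some _ _ h2)
          = 0 + (v.1.val • WeierstrassCurve.Affine.Point.some _ _ h1
            + v.2.val • WeierstrassCurve.Affine.Point.some _ _ h2) := by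
        rw [zero_add, show ((u.1 - v.1).val • WeierstrassCurve.Affine.Point.some _ _ h1
              + (u.2 - v.2).val • WeierstrassCurve.Affine.Point.some _ _ h2)
            + (v.1.val • WeierstrassCurve.Affine.Point.some _ _ h1
              + v.2.val • WeierstrassCurve.Affine.Point.some _ _ h2)
            = ((u.1 - v.1).val • WeierstrassCurve.Affine.Point.some _ _ h1
              + v.1.val • WeierstrassCurve.Affine.Point.some _ _ h1)
            + ((u.2 - v.2).val • WeierstrassCurve.Affine.Point.some _ _ h2
              + v.2.val • WeierstrassCurve.Affine.Point.some _ _ h2) from by abel,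
          h1e, h2e, huv]
      obtain ⟨he, hg⟩ := key _ _ (ZMod.val_lt _) (ZMod.val_lt _) (add_right_cancel hh)
      exact Prod.ext (sub_eq_zero.mp ((ZMod.val_eq_zero _).mp he))
        (sub_eq_zero.mp ((ZMod.val_eq_zero _).mp hg))
    · rintro ⟨P, hP⟩
      cases P with
      | zero =>
        refine ⟨(0, 0), Subtype.ext ?_⟩
        show (0 : ZMod 3).val • WeierstrassCurve.Affine.Point.some _ _ h1
          + (0 : ZMod 3).val • WeierstrassCurve.Affine.Point.some _ _ h2
          = WeierstrassCurve.Affine.Point.zero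
        rw [hval0, zero_nsmul, zero_nsmul, add_zero]
        rfl
      | @some x y h =>
        have h2P : WeierstrassCurve.Affine.Point.some _ _ h + WeierstrassCurve.Affine.Point.some _ _ h
            = -WeierstrassCurve.Affine.Point.some _ _ h := by
          apply eq_neg_of_add_eq_zero_left
          rw [show (3 : ℕ) = 2 + 1 from rfl, add_nsmul, two_nsmul, one_nsmul] at hP
          exact hP
        have hy0 : y ≠ W.negY x y := by
          intro hy
          rw [WeierstrassCurve.Affine.Point.add_self_of_Y_eq hy] at h2P
          exact WeierstrassCurve.Affine.Point.some_ne_zero h (neg_eq_zero.mp h2P.symm)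
        rw [WeierstrassCurve.Affine.Point.add_self_of_Y_ne hy0,
          WeierstrassCurve.Affine.Point.neg_some] at h2P
        have hxe := (WeierstrassCurve.Affine.Point.some.inj h2P).1
        rw [haddX] at hxe
        have hm3 : W.slope x x y y ^ 2 = 3 * x := by linear_combination hxe
        have hd : y - W.negY x y ≠ 0 := sub_ne_zero.mpr hy0
        have hm2 : W.slope x x y y * (y - W.negY x y)
            = 3 * x ^ 2 + 2 * W.a₂ * x + W.a₄ - W.a₁ * y := by
          rw [WeierstrassCurve.Affine.slope_of_Y_ne rfl hy0]
          exact div_mul_cancel₀ _ hd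
        rw [hneg, ha1, ha2, ha4] at hm2
        have heqs : y ^ 2 = x ^ 3 + (t ^ 3 - t ^ 2 + 2 * t) * x
            + (2 * t ^ 6 + t ^ 5 + t - 1) := by
          have he := (W.equation_iff x y).mp ((W.nonsingular_iff x y).mp h).1
          rw [ha1, ha2, ha3, ha4, ha6] at he
          linear_combination he
        have hkey : (3 * x ^ 2 + (t ^ 3 - t ^ 2 + 2 * t)) ^ 2
            = 12 * x * (x ^ 3 + (t ^ 3 - t ^ 2 + 2 * t) * x + (2 * t ^ 6 + t ^ 5 + t - 1)) := by
          linear_combination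
            (-(W.slope x x y y * (2 * y) + 3 * x ^ 2 + (t ^ 3 - t ^ 2 + 2 * t))) * hm2
            + 4 * y ^ 2 * hm3 + 12 * x * heqs
        have hquart : (x + 1) * (x + 2 * t ^ 2)
            * (x - (t ^ 2 + 3 + (4 * t ^ 2 + 3 * t + 3) * s))
            * (x - (t ^ 2 + 3 + (t ^ 2 + 2 * t + 2) * s)) = 0 := by
          linear_combination (-2) * hkey + ((8)*t^6*x + (8)*t^6 + (22)*t^5*x + (22)*t^5 + (4)*t^4*x^2 + (38)*t^4*x + (34)*t^4 + (11)*t^3*x^2 + (35)*t^3*x + (24)*t^3 + (17)*t^2*x^2 + (29)*t^2*x + (12)*t^2 + (12)*t*x^2 + (12)*t*x + (6)*x^2 + (6)*x) * hs + ((2)*s*t^6*x + (2)*s*t^6 + (2)*s*t^5*x + (2)*s*t^5 + (-1)*s*t^4*x^2 + (7)*s*t^4*x + (8)*s*t^4 + (-1)*s*t^3*x^2 + (5)*s*t^3*x + (6)*s*t^3 + (-1)*s*t^2*x^3 + s*t^2*x^2 + (8)*s*t^2*x + (6)*s*t^2 + (-1)*s*t*x^3 + (2)*s*t*x^2 + (3)*s*t*x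 + (-1)*s*x^3 + (2)*s*x^2 + (3)*s*x + (-6)*t^6*x + (4)*t^6 + (4)*t^5*x + (8)*t^5 + t^4*x^2 + (17)*t^4*x + (18)*t^4 + (2)*t^3*x^2 + (14)*t^3*x + (8)*t^3 + (8)*t^2*x^2 + (14)*t^2*x + (10)*t^2 + (-1)*x^4 + (-1)*x^3 + (3)*x^2 + (9)*x) * h5
        rcases mul_eq_zero.mp hquart with h123 | hc4
        · rcases mul_eq_zero.mp h123 with h12' | hc3
          · rcases mul_eq_zero.mp h12' with hc1 | hc2
            · -- x = -1
              have hx : x = -1 := by linear_combination hc1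
              subst hx
              have hysq : (y - s * (t ^ 3 - t ^ 2 + 2 * t - 2))
                  * (y + s * (t ^ 3 - t ^ 2 + 2 * t - 2)) = 0 := by
                linear_combination heqs - eq1
              rcases mul_eq_zero.mp hysq with hy' | hy'
              · have hy : y = s * (t ^ 3 - t ^ 2 + 2 * t - 2) := sub_eq_zero.mp hy'
                subst hy
                refine ⟨(1, 0), Subtype.ext ?_⟩
                show (1 : ZMod 3).val • WeierstrassCurve.Affine.Point.some _ _ h1
                  + (0 : ZMod 3).val • WeierstrassCurve.Affine.Point.some _ _ h2
                  = WeierstrassCurve.Affine.Point.some _ _ h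
                rw [hval1, hval0, one_nsmul, zero_nsmul, add_zero]
              · have hy : y = -(s * (t ^ 3 - t ^ 2 + 2 * t - 2)) :=
                  eq_neg_of_add_eq_zero_left hy'
                refine ⟨(2, 0), Subtype.ext ?_⟩
                show (2 : ZMod 3).val • WeierstrassCurve.Affine.Point.some _ _ h1
                  + (0 : ZMod 3).val • WeierstrassCurve.Affine.Point.some _ _ h2
                  = WeierstrassCurve.Affine.Point.some _ _ h
                rw [hval2, hval0, two_nsmul, zero_nsmul, add_zero, hdbl1,
                  WeierstrassCurve.Affine.Point.neg_some]
                simp only [WeierstrassCurve.Affine.Point.some.injEq]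
                refine ⟨trivial, ?_⟩
                rw [hneg, hy]
            · -- x = -2t²
              have hx : x = -2 * t ^ 2 := by linear_combination hc2
              subst hx
              have hysq : (y - 2 * (t ^ 3 - 2 * t ^ 2 + 2 * t + 1))
                  * (y + 2 * (t ^ 3 - 2 * t ^ 2 + 2 * t + 1)) = 0 := by
                linear_combination heqs - eq2
              rcases mul_eq_zero.mp hysq with hy' | hy'
              · have hy : y = 2 * (t ^ 3 - 2 * t ^ 2 + 2 * t + 1) := sub_eq_zero.mp hy'
                subst hy
                refine ⟨(0, 1), Subtype.ext ?_⟩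
                show (0 : ZMod 3).val • WeierstrassCurve.Affine.Point.some _ _ h1
                  + (1 : ZMod 3).val • WeierstrassCurve.Affine.Point.some _ _ h2
                  = WeierstrassCurve.Affine.Point.some _ _ h
                rw [hval1, hval0, one_nsmul, zero_nsmul, zero_add]
              · have hy : y = -(2 * (t ^ 3 - 2 * t ^ 2 + 2 * t + 1)) :=
                  eq_neg_of_add_eq_zero_left hy'
                refine ⟨(0, 2), Subtype.ext ?_⟩
                show (0 : ZMod 3).val • WeierstrassCurve.Affine.Point.some _ _ h1
                  + (2 : ZMod 3).val • WeierstrassCurve.Affine.Point.some _ _ h2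
                  = WeierstrassCurve.Affine.Point.some _ _ h
                rw [hval2, hval0, two_nsmul, zero_nsmul, zero_add, hdbl2,
                  WeierstrassCurve.Affine.Point.neg_some]
                simp only [WeierstrassCurve.Affine.Point.some.injEq]
                refine ⟨trivial, ?_⟩
                rw [hneg, hy]
          · -- x = x₃
            have hx : x = t ^ 2 + 3 + (4 * t ^ 2 + 3 * t + 3) * s := sub_eq_zero.mp hc3
            subst hx
            have hysq : (y - (2 * t ^ 3 + 4 * t ^ 2 + 4 * t + (4 * t ^ 2 + 3 * t + 3) * s))
                * (y + (2 * t ^ 3 + 4 * t ^ 2 + 4 * t + (4 * t ^ 2 + 3 * t + 3) * s)) = 0 := by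
              linear_combination heqs - eq3
            rcases mul_eq_zero.mp hysq with hy' | hy'
            · have hy : y = 2 * t ^ 3 + 4 * t ^ 2 + 4 * t + (4 * t ^ 2 + 3 * t + 3) * s :=
                sub_eq_zero.mp hy'
              subst hy
              refine ⟨(1, 1), Subtype.ext ?_⟩
              show (1 : ZMod 3).val • WeierstrassCurve.Affine.Point.some _ _ h1
                + (1 : ZMod 3).val • WeierstrassCurve.Affine.Point.some _ _ h2
                = WeierstrassCurve.Affine.Point.some _ _ h
              rw [hval1, one_nsmul, one_nsmul, hadd12]
            · have hy : y = -(2 * t ^ 3 + 4 * t ^ 2 + 4 * t + (4 * t ^ 2 + 3 * t + 3) * s) :=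
                eq_neg_of_add_eq_zero_left hy'
              refine ⟨(2, 2), Subtype.ext ?_⟩
              show (2 : ZMod 3).val • WeierstrassCurve.Affine.Point.some _ _ h1
                + (2 : ZMod 3).val • WeierstrassCurve.Affine.Point.some _ _ h2
                = WeierstrassCurve.Affine.Point.some _ _ h
              rw [hval2, two_nsmul, two_nsmul, hdbl1, hdbl2, ← neg_add, hadd12,
                WeierstrassCurve.Affine.Point.neg_some]
              simp only [WeierstrassCurve.Affine.Point.some.injEq]
              refine ⟨trivial, ?_⟩
              rw [hneg, hy]
        · -- x = x₄
          have hx : x = t ^ 2 + 3 + (t ^ 2 + 2 * t + 2) * s := sub_eq_zero.mp hc4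
          subst hx
          have hysq : (y - (3 * t ^ 3 + t ^ 2 + t + (4 * t ^ 2 + 3 * t + 3) * s))
              * (y + (3 * t ^ 3 + t ^ 2 + t + (4 * t ^ 2 + 3 * t + 3) * s)) = 0 := by
            linear_combination heqs - eq4
          rcases mul_eq_zero.mp hysq with hy' | hy'
          · have hy : y = 3 * t ^ 3 + t ^ 2 + t + (4 * t ^ 2 + 3 * t + 3) * s :=
              sub_eq_zero.mp hy'
            subst hy
            refine ⟨(1, 2), Subtype.ext ?_⟩
            show (1 : ZMod 3).val • WeierstrassCurve.Affine.Point.some _ _ h1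
              + (2 : ZMod 3).val • WeierstrassCurve.Affine.Point.some _ _ h2
              = WeierstrassCurve.Affine.Point.some _ _ h
            rw [hval1, hval2, one_nsmul, two_nsmul, hdbl2, hsub12]
          · have hy : y = -(3 * t ^ 3 + t ^ 2 + t + (4 * t ^ 2 + 3 * t + 3) * s) :=
              eq_neg_of_add_eq_zero_left hy'
            refine ⟨(2, 1), Subtype.ext ?_⟩
            show (2 : ZMod 3).val • WeierstrassCurve.Affine.Point.some _ _ h1
              + (1 : ZMod 3).val • WeierstrassCurve.Affine.Point.some _ _ h2
              = WeierstrassCurve.Affine.Point.some _ _ h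
            rw [hval2, hval1, two_nsmul, one_nsmul, hdbl1,
              show -WeierstrassCurve.Affine.Point.some _ _ h1 + WeierstrassCurve.Affine.Point.some _ _ h2
                = -(WeierstrassCurve.Affine.Point.some _ _ h1
                  + -WeierstrassCurve.Affine.Point.some _ _ h2) from by abel,
              hsub12, WeierstrassCurve.Affine.Point.neg_some]
            simp only [WeierstrassCurve.Affine.Point.some.injEq]
            refine ⟨trivial, ?_⟩
            rw [hneg, hy]
  have hcard : Nat.card {P : W.Point // 3 • P = 0} = 9 := by
    rw [← Nat.card_eq_of_bijective _ hbij, Nat.card_prod, Nat.card_zmod]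
  exact ⟨⟨h1, tor1⟩, ⟨h1', tor1'⟩, ⟨h2, tor2⟩, ⟨h2', tor2'⟩, hcard⟩
end

section
/- Let p(X) = X³ − X² + 2X and q(X) = 2X⁶ + X⁵ + X − 1 over 𝔽₅, and let 𝔽₂₅ be the field with 25 elements. For every a ∈ 𝔽₂₅ with a ∉ 𝔽₅ and −16(4p(a)³ + 27q(a)²) ≠ 0, the group of 𝔽₂₅-rational points of the elliptic curve y² = x³ + p(a)x + q(a) over 𝔽₂₅ is not cyclic. (These curves are exactly the reductions of E : y² = x³ + p(t)x + q(t) over 𝔽₅(t) at the degree-2 places of good reduction.) -/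
private lemma some_eq_some {F : Type*} [Field F] {W : WeierstrassCurve.Affine F}
    {x₁ y₁ x₂ y₂ : F} (h₁ : W.Nonsingular x₁ y₁) (h₂ : W.Nonsingular x₂ y₂)
    (hx : x₁ = x₂) (hy : y₁ = y₂) :
    WeierstrassCurve.Affine.Point.some _ _ h₁ = WeierstrassCurve.Affine.Point.some _ _ h₂ := by
  subst hx; subst hy; rfl

private theorem aux_not_cyclic {G : Type*} [AddCommGroup G] {P Q : G}
    (h3P : (3 : ℤ) • P = 0) (h3Q : (3 : ℤ) • Q = 0)
    (hP0 : P ≠ 0) (hQ0 : Q ≠ 0) (hQP : Q ≠ P) (hQP' : Q ≠ -P) :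
    ¬ IsAddCyclic G := by
  rintro ⟨g, hg⟩
  obtain ⟨m, hm⟩ := hg P
  obtain ⟨n, hn⟩ := hg Q
  simp only at hm hn
  have key : ∀ (R : G) (r : ℤ), r • g = R → (3 : ℤ) • R = 0 → R ≠ 0 →
      R = ((addOrderOf g : ℤ) / 3) • g ∨ R = -(((addOrderOf g : ℤ) / 3) • g) := by
    intro R r hr h3R hR0
    have hdm : (addOrderOf g : ℤ) ∣ 3 * r := by
      rw [addOrderOf_dvd_iff_zsmul_eq_zero, mul_zsmul, hr]; exact h3R
    have hdm' : ¬ (addOrderOf g : ℤ) ∣ r := fun h =>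
      hR0 (hr ▸ addOrderOf_dvd_iff_zsmul_eq_zero.mp h)
    by_cases h3 : (3 : ℤ) ∣ (addOrderOf g : ℤ)
    · obtain ⟨e, he⟩ := h3
      have hediv : ((addOrderOf g : ℤ) / 3) = e := by
        rw [he]; exact Int.mul_ediv_cancel_left e (by norm_num)
      have h3h : (3 : ℤ) • (e • g) = 0 := by
        rw [← mul_zsmul, ← he, addOrderOf_dvd_iff_zsmul_eq_zero.mp dvd_rfl]
      have her : e ∣ r := by
        have h' := he ▸ hdm
        exact (mul_dvd_mul_iff_left (by norm_num : (3 : ℤ) ≠ 0)).mp h'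
      obtain ⟨r', hr'⟩ := her
      have hRr' : R = r' • (e • g) := by rw [← hr, hr', mul_comm, mul_zsmul]
      have h3r' : ¬ (3 : ℤ) ∣ r' := by
        rintro ⟨k, hk⟩
        exact hdm' ⟨k, by rw [hr', hk, he]; ring⟩
      have hsplit : R = (r' % 3) • (e • g) := by
        have hsm : r' • (e • g) = (3 * (r' / 3) + r' % 3) • (e • g) := by
          rw [Int.mul_ediv_add_emod]
        rw [hRr', hsm, add_zsmul, mul_comm (3 : ℤ), mul_zsmul, h3h, smul_zero, zero_add]
      have hmod : r' % 3 = 1 ∨ r' % 3 = 2 := by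
        have h0 : r' % 3 ≠ 0 := fun h => h3r' (Int.dvd_of_emod_eq_zero h)
        omega
      rw [hediv]
      rcases hmod with h | h
      · left; rw [hsplit, h, one_zsmul]
      · right
        have h2h : (2 : ℤ) • (e • g) = -(e • g) := by
          have h' := h3h
          rw [show (3 : ℤ) = 2 + 1 by norm_num, add_zsmul, one_zsmul] at h'
          exact eq_neg_of_add_eq_zero_left h'
        rw [hsplit, h, h2h]
    · exfalso
      have hco : IsCoprime ((addOrderOf g : ℤ)) 3 :=
        (Int.prime_three.coprime_iff_not_dvd.mpr h3).symm
      exact hdm' (hco.dvd_of_dvd_mul_left hdm)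
  have hP := key P m hm h3P hP0
  have hQ := key Q n hn h3Q hQ0
  rcases hP with hP | hP <;> rcases hQ with hQ | hQ
  · exact hQP (hQ.trans hP.symm)
  · exact hQP' (by rw [hQ, hP])
  · exact hQP' (by rw [hQ, hP, neg_neg])
  · exact hQP (hQ.trans hP.symm)

set_option maxHeartbeats 2000000 in
open Classical in
/-- Let `p(X) = X³ - X² + 2X` and `q(X) = 2X⁶ + X⁵ + X - 1` over `𝔽₅`. For
every `a ∈ 𝔽₂₅` not in the prime subfield `𝔽₅` with `-16(4p(a)³ + 27q(a)²) ≠ 0`, the group of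
`𝔽₂₅`-points of the elliptic curve `y² = x³ + p(a)x + q(a)` is not cyclic. -/
theorem stmt_19 (a : GaloisField 5 2)
    (ha : a ∉ Set.range (algebraMap (ZMod 5) (GaloisField 5 2)))
    (hΔ : (-16 : GaloisField 5 2) *
        (4 * (a ^ 3 - a ^ 2 + 2 * a) ^ 3 + 27 * (2 * a ^ 6 + a ^ 5 + a - 1) ^ 2) ≠ 0)
    (W : WeierstrassCurve.Affine (GaloisField 5 2))
    (hW : W = ⟨0, 0, 0, a ^ 3 - a ^ 2 + 2 * a, 2 * a ^ 6 + a ^ 5 + a - 1⟩) :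
    ¬ IsAddCyclic W.Point := by
  have ha1 : W.a₁ = 0 := by rw [hW]
  have ha2 : W.a₂ = 0 := by rw [hW]
  have ha3 : W.a₃ = 0 := by rw [hW]
  have ha4 : W.a₄ = a ^ 3 - a ^ 2 + 2 * a := by rw [hW]
  have ha6 : W.a₆ = 2 * a ^ 6 + a ^ 5 + a - 1 := by rw [hW]
  have h5 : (5 : GaloisField 5 2) = 0 := by
    have h := CharP.cast_eq_zero (GaloisField 5 2) 5
    exact_mod_cast h
  haveI : Fintype (GaloisField 5 2) := Fintype.ofFinite _
  have hcard : Fintype.card (GaloisField 5 2) = 25 := by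
    have h := GaloisField.card 5 2 (by norm_num)
    rw [Nat.card_eq_fintype_card] at h
    omega
  have haK : a ^ 25 = a := by
    have h := FiniteField.pow_card a
    rwa [hcard] at h
  have h2K : (2 : GaloisField 5 2) ≠ 0 := by
    intro h
    exact one_ne_zero (α := GaloisField 5 2) (by linear_combination 3 * h - h5)
  have hu : a ^ 5 - a ≠ 0 := by
    intro h
    have hfac : a * (a - 1) * (a - 2) * (a - 3) * (a - 4) = 0 := by
      linear_combination h - (2 * a ^ 4 - 7 * a ^ 3 + 10 * a ^ 2 - 5 * a) * h5
    have hmem : ∀ c : ZMod 5, algebraMap (ZMod 5) (GaloisField 5 2) c ≠ a :=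
      fun c hc => ha ⟨c, hc⟩
    rcases mul_eq_zero.mp hfac with hfac | h4
    rcases mul_eq_zero.mp hfac with hfac | h3
    rcases mul_eq_zero.mp hfac with hfac | h2
    rcases mul_eq_zero.mp hfac with h0 | h1
    · exact hmem 0 (by rw [map_zero]; exact h0.symm)
    · exact hmem 1 (by rw [map_one]; exact (sub_eq_zero.mp h1).symm)
    · exact hmem 2 (by rw [map_ofNat]; exact (sub_eq_zero.mp h2).symm)
    · exact hmem 3 (by rw [map_ofNat]; exact (sub_eq_zero.mp h3).symm)
    · exact hmem 4 (by rw [map_ofNat]; exact (sub_eq_zero.mp h4).symm)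
  set x1 : GaloisField 5 2 := (4 : GaloisField 5 2) with hx1def
  set y1 : GaloisField 5 2 := (3 + 3 * a + 4 * a ^ 2 + 3 * a ^ 3 + 3 * a ^ 4 + 1 * a ^ 5 + 3 * a ^ 6 + 2 * a ^ 7 + 4 * a ^ 8 + 3 * a ^ 12 + 2 * a ^ 14 + 1 * a ^ 15 + 4 * a ^ 18 + 1 * a ^ 19 : GaloisField 5 2) with hy1def
  set x2 : GaloisField 5 2 := (4 + 4 * a + 4 * a ^ 2 + 1 * a ^ 3 + 4 * a ^ 4 + 1 * a ^ 5 + 4 * a ^ 8 + 4 * a ^ 9 + 2 * a ^ 11 + 3 * a ^ 12 + 4 * a ^ 13 + 3 * a ^ 14 + 3 * a ^ 15 + 4 * a ^ 16 + 2 * a ^ 17 + 2 * a ^ 18 : GaloisField 5 2) with hx2def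
  set y2 : GaloisField 5 2 := (3 + 2 * a + 3 * a ^ 4 + 1 * a ^ 6 + 1 * a ^ 7 + 3 * a ^ 8 + 4 * a ^ 9 + 2 * a ^ 10 + 3 * a ^ 11 + 3 * a ^ 12 + 2 * a ^ 13 + 1 * a ^ 14 + 1 * a ^ 15 + 3 * a ^ 16 + 2 * a ^ 17 + 4 * a ^ 18 + 2 * a ^ 19 : GaloisField 5 2) with hy2def
  have cancel : ∀ E : GaloisField 5 2, E * (a ^ 5 - a) = 0 → E = 0 :=
    fun E h => (mul_eq_zero.mp h).resolve_right hu
  have e11 : y1 ^ 2 = x1 ^ 3 + (a ^ 3 - a ^ 2 + 2 * a) * x1 + (2 * a ^ 6 + a ^ 5 + a - 1) := by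
    have h := cancel (y1 ^ 2 - (x1 ^ 3 + (a ^ 3 - a ^ 2 + 2 * a) * x1 + (2 * a ^ 6 + a ^ 5 + a - 1)))
      (by rw [hx1def, hy1def]; linear_combination (41 + 24 * a + 2 * a ^ 2 + 8 * a ^ 3 + 31 * a ^ 4 + 18 * a ^ 5 + 23 * a ^ 6 + 8 * a ^ 7 + (-12) * a ^ 8 + (-8) * a ^ 9 + 23 * a ^ 10 + 6 * a ^ 11 + 4 * a ^ 13 + 1 * a ^ 14 + 16 * a ^ 16 + 8 * a ^ 17 + 1 * a ^ 18 : GaloisField 5 2) * haK + (19 * a + 3 * a ^ 2 + (-7) * a ^ 3 + (-6) * a ^ 4 + (-15) * a ^ 5 + (-4) * a ^ 6 + 1 * a ^ 7 + (-2) * a ^ 8 + (-7) * a ^ 9 + (-5) * a ^ 10 + 3 * a ^ 11 + 4 * a ^ 12 + 4 * a ^ 13 + 6 * a ^ 14 + (-2) * a ^ 16 + 3 * a ^ 17 + 4 * a ^ 18 + 1 * a ^ 19 + (-4) * a ^ 21 + (-4) * a ^ 22 + 2 * a ^ 23 + 6 * a ^ 24 : GaloisField 5 2) * h5)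
    linear_combination h
  have e12 : y2 ^ 2 = x2 ^ 3 + (a ^ 3 - a ^ 2 + 2 * a) * x2 + (2 * a ^ 6 + a ^ 5 + a - 1) := by
    have h := cancel (y2 ^ 2 - (x2 ^ 3 + (a ^ 3 - a ^ 2 + 2 * a) * x2 + (2 * a ^ 6 + a ^ 5 + a - 1)))
      (by rw [hx2def, hy2def]; linear_combination ((-544) + (-419) * a + (-114) * a ^ 2 + 81 * a ^ 3 + 33 * a ^ 4 + 36 * a ^ 5 + (-85) * a ^ 6 + 42 * a ^ 7 + (-268) * a ^ 8 + (-537) * a ^ 9 + (-817) * a ^ 10 + (-1082) * a ^ 11 + (-1228) * a ^ 12 + (-1386) * a ^ 13 + (-1133) * a ^ 14 + (-958) * a ^ 15 + (-738) * a ^ 16 + (-662) * a ^ 17 + (-671) * a ^ 18 + (-634) * a ^ 19 + (-732) * a ^ 20 + (-753) * a ^ 21 + (-840) * a ^ 22 + (-831) * a ^ 23 + (-815) * a ^ 24 + (-801) * a ^ 25 + (-726) * a ^ 26 + (-646) * a ^ 27 + (-502) * a ^ 28 + (-372) * a ^ 29 + (-244) * a ^ 30 + (-140) * a ^ 31 +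 (-72) * a ^ 32 + (-24) * a ^ 33 + (-8) * a ^ 34 : GaloisField 5 2) * haK + ((-98) * a + (-46) * a ^ 2 + 54 * a ^ 3 + 117 * a ^ 4 + 127 * a ^ 5 + 123 * a ^ 6 + 74 * a ^ 7 + 43 * a ^ 8 + (-30) * a ^ 9 + (-60) * a ^ 10 + (-78) * a ^ 11 + (-96) * a ^ 12 + (-91) * a ^ 13 + (-74) * a ^ 14 + (-29) * a ^ 15 + 23 * a ^ 16 + 89 * a ^ 17 + 153 * a ^ 18 + 129 * a ^ 19 + 82 * a ^ 20 + 3 * a ^ 21 + (-96) * a ^ 22 + (-150) * a ^ 23 + (-169) * a ^ 24 : GaloisField 5 2) * h5)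
    linear_combination h
  have e21 : (3 * x1 ^ 2 + (a ^ 3 - a ^ 2 + 2 * a)) ^ 2 = 12 * x1 * y1 ^ 2 := by
    have h := cancel ((3 * x1 ^ 2 + (a ^ 3 - a ^ 2 + 2 * a)) ^ 2 - 12 * x1 * y1 ^ 2)
      (by rw [hx1def, hy1def]; linear_combination ((-1968) + (-1152) * a + (-96) * a ^ 2 + (-384) * a ^ 3 + (-1488) * a ^ 4 + (-864) * a ^ 5 + (-1104) * a ^ 6 + (-384) * a ^ 7 + 576 * a ^ 8 + 384 * a ^ 9 + (-1104) * a ^ 10 + (-288) * a ^ 11 + (-192) * a ^ 13 + (-48) * a ^ 14 + (-768) * a ^ 16 + (-384) * a ^ 17 + (-48) * a ^ 18 : GaloisField 5 2) * haK + ((-768) * a + (-96) * a ^ 2 + 316 * a ^ 3 + 308 * a ^ 4 + 575 * a ^ 5 + 154 * a ^ 6 + (-9) * a ^ 7 + 76 * a ^ 8 + 337 * a ^ 9 + 230 * a ^ 10 + (-163) * a ^ 11 + (-192) * a ^ 12 + (-192) * a ^ 13 + (-288) * a ^ 14 + 96 * a ^ 16 + (-144) * a ^ 17 + (-192) * a ^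 18 + (-48) * a ^ 19 + 192 * a ^ 21 + 192 * a ^ 22 + (-96) * a ^ 23 + (-288) * a ^ 24 : GaloisField 5 2) * h5)
    linear_combination h
  have e22 : (3 * x2 ^ 2 + (a ^ 3 - a ^ 2 + 2 * a)) ^ 2 = 12 * x2 * y2 ^ 2 := by
    have h := cancel ((3 * x2 ^ 2 + (a ^ 3 - a ^ 2 + 2 * a)) ^ 2 - 12 * x2 * y2 ^ 2)
      (by rw [hx2def, hy2def]; linear_combination (105612 + 106620 * a + 89502 * a ^ 2 + 66978 * a ^ 3 + 32139 * a ^ 4 + 15096 * a ^ 5 + 4320 * a ^ 6 + (-7140) * a ^ 7 + (-2229) * a ^ 8 + 20010 * a ^ 9 + 75216 * a ^ 10 + 121650 * a ^ 11 + 188100 * a ^ 12 + 244086 * a ^ 13 + 268680 * a ^ 14 + 261924 * a ^ 15 + 232437 * a ^ 16 + 223260 * a ^ 17 + 201690 * a ^ 18 + 200280 * a ^ 19 + 211902 * a ^ 20 + 241680 * a ^ 21 + 276804 * a ^ 22 + 297444 * a ^ 23 + 331275 * a ^ 24 + 354516 * a ^ 25 + 379248 * a ^ 26 + 382524 * a ^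 27 + 372195 * a ^ 28 + 354192 * a ^ 29 + 322638 * a ^ 30 + 292800 * a ^ 31 + 258441 * a ^ 32 + 237636 * a ^ 33 + 222804 * a ^ 34 + 212568 * a ^ 35 + 204852 * a ^ 36 + 193896 * a ^ 37 + 184158 * a ^ 38 + 168732 * a ^ 39 + 151785 * a ^ 40 + 131472 * a ^ 41 + 109872 * a ^ 42 + 88488 * a ^ 43 + 66816 * a ^ 44 + 47808 * a ^ 45 + 31320 * a ^ 46 + 19008 * a ^ 47 + 10368 * a ^ 48 + 4896 * a ^ 49 + 2016 * a ^ 50 + 576 * a ^ 51 + 144 * a ^ 52 : GaloisField 5 2) * haK + (20748 * a + 19644 * a ^ 2 + 13474 * a ^ 3 + 5642 * a ^ 4 + (-4930) * a ^ 5 + (-11138) * a ^ 6 + (-14841) * a ^ 7 + (-15464) * a ^ 8 + (-12386) * a ^ 9 + (-7450) * a ^ 10 + 881 * a ^ 11 + 6570 * a ^ 12 + 14427 * a ^ 13 + 17922 * a ^ 14 + 16452 * a ^ 15 + 10512 * a ^ 16 + 414 * a ^ 17 + (-9990) * a ^ 18 + (-20022) * a ^ 19 + (-22440) * a ^ 20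 + (-18273) * a ^ 21 + (-8988) * a ^ 22 + 4056 * a ^ 23 + 15180 * a ^ 24 : GaloisField 5 2) * h5)
    linear_combination h
  have e31 : y1 * (4 + 1 * a ^ 3 + 1 * a ^ 4 + 2 * a ^ 5 + 4 * a ^ 6 + 2 * a ^ 7 + 4 * a ^ 8 + 4 * a ^ 9 + 3 * a ^ 10 + 2 * a ^ 11 + 1 * a ^ 12 + 2 * a ^ 14 + 2 * a ^ 15 + 2 * a ^ 16 + 1 * a ^ 17 + 2 * a ^ 18 : GaloisField 5 2) =
      -16 * (4 * (a ^ 3 - a ^ 2 + 2 * a) ^ 3 + 27 * (2 * a ^ 6 + a ^ 5 + a - 1) ^ 2) := by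
    have h := cancel (y1 * (4 + 1 * a ^ 3 + 1 * a ^ 4 + 2 * a ^ 5 + 4 * a ^ 6 + 2 * a ^ 7 + 4 * a ^ 8 + 4 * a ^ 9 + 3 * a ^ 10 + 2 * a ^ 11 + 1 * a ^ 12 + 2 * a ^ 14 + 2 * a ^ 15 + 2 * a ^ 16 + 1 * a ^ 17 + 2 * a ^ 18 : GaloisField 5 2) -
        -16 * (4 * (a ^ 3 - a ^ 2 + 2 * a) ^ 3 + 27 * (2 * a ^ 6 + a ^ 5 + a - 1) ^ 2))
      (by rw [hy1def]; linear_combination (4 + 18 * a + 13 * a ^ 2 + 17 * a ^ 3 + 21 * a ^ 4 + 7 * a ^ 5 + 18 * a ^ 6 + 22 * a ^ 7 + 13 * a ^ 8 + 8 * a ^ 9 + 8 * a ^ 10 + (-1) * a ^ 11 + 4 * a ^ 12 + 10 * a ^ 13 + 10 * a ^ 14 + 6 * a ^ 15 + 9 * a ^ 16 + 2 * a ^ 17 : GaloisField 5 2) * haK + ((-88) * a + 174 * a ^ 2 + (-87) * a ^ 3 + (-102) * a ^ 4 + 243 * a ^ 5 + (-230) * a ^ 6 + 425 * a ^ 7 +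 (-359) * a ^ 8 + (-121) * a ^ 9 + 39 * a ^ 10 + (-429) * a ^ 11 + 110 * a ^ 12 + (-387) * a ^ 13 + 14 * a ^ 14 + 87 * a ^ 15 + 348 * a ^ 16 + 351 * a ^ 17 + (-2) * a ^ 19 + 2 * a ^ 20 + 2 * a ^ 21 + 3 * a ^ 22 + 6 * a ^ 23 + 1 * a ^ 24 : GaloisField 5 2) * h5)
    linear_combination h
  have e32 : y2 * (4 + 2 * a + 3 * a ^ 2 + 2 * a ^ 5 + 2 * a ^ 6 + 1 * a ^ 7 + 3 * a ^ 8 + 1 * a ^ 9 + 2 * a ^ 11 + 1 * a ^ 12 + 1 * a ^ 15 + 2 * a ^ 18 + 3 * a ^ 19 : GaloisField 5 2) =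
      -16 * (4 * (a ^ 3 - a ^ 2 + 2 * a) ^ 3 + 27 * (2 * a ^ 6 + a ^ 5 + a - 1) ^ 2) := by
    have h := cancel (y2 * (4 + 2 * a + 3 * a ^ 2 + 2 * a ^ 5 + 2 * a ^ 6 + 1 * a ^ 7 + 3 * a ^ 8 + 1 * a ^ 9 + 2 * a ^ 11 + 1 * a ^ 12 + 1 * a ^ 15 + 2 * a ^ 18 + 3 * a ^ 19 : GaloisField 5 2) -
        -16 * (4 * (a ^ 3 - a ^ 2 + 2 * a) ^ 3 + 27 * (2 * a ^ 6 + a ^ 5 + a - 1) ^ 2))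
      (by rw [hy2def]; linear_combination (14 + 5 * a + 3 * a ^ 3 + 10 * a ^ 4 + 5 * a ^ 5 + 7 * a ^ 6 + 19 * a ^ 7 + 17 * a ^ 8 + 14 * a ^ 9 + 13 * a ^ 10 + 5 * a ^ 11 + (-4) * a ^ 12 + (-7) * a ^ 13 + 5 * a ^ 14 + 13 * a ^ 15 + 14 * a ^ 16 + 16 * a ^ 17 + 6 * a ^ 18 : GaloisField 5 2) * haK + ((-86) * a + 171 * a ^ 2 + (-89) * a ^ 3 + (-103) * a ^ 4 + 242 * a ^ 5 + (-229) * a ^ 6 + 425 * a ^ 7 + (-356) * a ^ 8 + (-115) * a ^ 9 + 42 * a ^ 10 + (-425) * a ^ 11 + 111 * a ^ 12 + (-388) * a ^ 13 + 12 * a ^ 14 + 87 * a ^ 15 + 348 * a ^ 16 + 348 * a ^ 17 + 1 * a ^ 18 + (-4) * a ^ 19 + (-5) * a ^ 20 + (-1) * a ^ 21 + 3 * a ^ 22 + 6 * a ^ 23 + 5 * a ^ 24 : GaloisField 5 2) * h5)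
    linear_combination h
  have e4 : (x1 - x2) * (4 + 2 * a + 1 * a ^ 2 + 1 * a ^ 3 + 1 * a ^ 4 + 2 * a ^ 5 + 3 * a ^ 6 + 4 * a ^ 7 + 3 * a ^ 8 + 1 * a ^ 9 + 2 * a ^ 10 + 2 * a ^ 11 + 1 * a ^ 12 + 2 * a ^ 13 + 3 * a ^ 14 + 2 * a ^ 15 + 2 * a ^ 17 + 3 * a ^ 18 + 1 * a ^ 19 : GaloisField 5 2) =
      -16 * (4 * (a ^ 3 - a ^ 2 + 2 * a) ^ 3 + 27 * (2 * a ^ 6 + a ^ 5 + a - 1) ^ 2) := by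
    have h := cancel ((x1 - x2) * (4 + 2 * a + 1 * a ^ 2 + 1 * a ^ 3 + 1 * a ^ 4 + 2 * a ^ 5 + 3 * a ^ 6 + 4 * a ^ 7 + 3 * a ^ 8 + 1 * a ^ 9 + 2 * a ^ 10 + 2 * a ^ 11 + 1 * a ^ 12 + 2 * a ^ 13 + 3 * a ^ 14 + 2 * a ^ 15 + 2 * a ^ 17 + 3 * a ^ 18 + 1 * a ^ 19 : GaloisField 5 2) -
        -16 * (4 * (a ^ 3 - a ^ 2 + 2 * a) ^ 3 + 27 * (2 * a ^ 6 + a ^ 5 + a - 1) ^ 2))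
      (by rw [hx1def, hx2def]; linear_combination ((-23) + (-25) * a + (-22) * a ^ 2 + (-24) * a ^ 3 + (-16) * a ^ 4 + (-13) * a ^ 5 + (-23) * a ^ 6 + (-18) * a ^ 7 + (-14) * a ^ 8 + (-17) * a ^ 9 + (-24) * a ^ 10 + (-25) * a ^ 11 + (-21) * a ^ 12 + (-22) * a ^ 13 + (-19) * a ^ 14 + (-14) * a ^ 15 + (-8) * a ^ 16 + (-2) * a ^ 17 : GaloisField 5 2) * haK + ((-91) * a + 171 * a ^ 2 + (-86) * a ^ 3 + (-104) * a ^ 4 + 242 * a ^ 5 + (-232) * a ^ 6 + 420 * a ^ 7 + (-360) * a ^ 8 + (-113) * a ^ 9 + 50 * a ^ 10 + (-425) * a ^ 11 + 115 * a ^ 12 + (-387) * a ^ 13 + 7 * a ^ 14 + 87 * a ^ 15 + 350 * a ^ 16 + 351 * a ^ 17 + 3 * a ^ 18 + 3 * a ^ 19 + 2 * a ^ 20 + (-2) * a ^ 21 + 1 * a ^ 22 + 1 * a ^ 23 + (-3) * a ^ 24 : GaloisField 5 2) * h5)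
    linear_combination h
  have hy1 : y1 ≠ 0 := fun h => hΔ (by rw [← e31, h, zero_mul])
  have hy2 : y2 ≠ 0 := fun h => hΔ (by rw [← e32, h, zero_mul])
  have hx12 : x1 ≠ x2 := fun h => hΔ (by rw [← e4, h, sub_self, zero_mul])
  have hns1 : W.Nonsingular x1 y1 := by
    rw [WeierstrassCurve.Affine.nonsingular_iff, WeierstrassCurve.Affine.equation_iff]
    rw [ha1, ha2, ha3, ha4, ha6]
    refine ⟨by linear_combination e11, Or.inr ?_⟩
    intro h
    exact hy1 (by linear_combination 3 * h - y1 * h5)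
  have hns2 : W.Nonsingular x2 y2 := by
    rw [WeierstrassCurve.Affine.nonsingular_iff, WeierstrassCurve.Affine.equation_iff]
    rw [ha1, ha2, ha3, ha4, ha6]
    refine ⟨by linear_combination e12, Or.inr ?_⟩
    intro h
    exact hy2 (by linear_combination 3 * h - y2 * h5)
  have hneg : ∀ x y : GaloisField 5 2, y ≠ 0 → y ≠ W.negY x y := by
    intro x y hy0 h
    rw [WeierstrassCurve.Affine.negY, ha1, ha3] at h
    exact hy0 (by linear_combination 3 * h - y * h5)
  have hneg1 : y1 ≠ W.negY x1 y1 := hneg x1 y1 hy1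
  have hneg2 : y2 ≠ W.negY x2 y2 := hneg x2 y2 hy2
  have hdouble : ∀ (x y : GaloisField 5 2) (hns : W.Nonsingular x y) (hneg' : y ≠ W.negY x y)
      (hpsi : (3 * x ^ 2 + (a ^ 3 - a ^ 2 + 2 * a)) ^ 2 = 12 * x * y ^ 2) (hy0 : y ≠ 0),
      WeierstrassCurve.Affine.Point.some _ _ hns + WeierstrassCurve.Affine.Point.some _ _ hns
        = -WeierstrassCurve.Affine.Point.some _ _ hns := by
    intro x y hns hneg' hpsi hy0
    rw [WeierstrassCurve.Affine.Point.add_self_of_Y_ne hneg',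
      WeierstrassCurve.Affine.Point.neg_some]
    have h2y : (2 : GaloisField 5 2) * y ≠ 0 := mul_ne_zero h2K hy0
    have hd : y - W.negY x y = 2 * y := by
      rw [WeierstrassCurve.Affine.negY, ha1, ha3]; ring
    have hslope : W.slope x x y y = (3 * x ^ 2 + (a ^ 3 - a ^ 2 + 2 * a)) / (2 * y) := by
      rw [WeierstrassCurve.Affine.slope_of_Y_ne rfl hneg', hd, ha1, ha2, ha4]
      congr 1
      ring
    have hl2 : (W.slope x x y y) ^ 2 = 3 * x := by
      rw [hslope, div_pow, div_eq_iff (pow_ne_zero 2 h2y)]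
      linear_combination hpsi
    have hxadd : W.addX x x (W.slope x x y y) = x := by
      rw [WeierstrassCurve.Affine.addX, hl2, ha1, ha2]
      ring
    have hyadd : W.addY x x y (W.slope x x y y) = W.negY x y := by
      rw [WeierstrassCurve.Affine.addY, WeierstrassCurve.Affine.negAddY, hxadd,
        show W.slope x x y y * (x - x) + y = y by ring]
    exact some_eq_some _ _ hxadd hyadd
  set P : W.Point := WeierstrassCurve.Affine.Point.some _ _ hns1 with hPdef
  set Q : W.Point := WeierstrassCurve.Affine.Point.some _ _ hns2 with hQdef
  have hP2 : P + P = -P := hdouble x1 y1 hns1 hneg1 e21 hy1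
  have hQ2 : Q + Q = -Q := hdouble x2 y2 hns2 hneg2 e22 hy2
  have h3P : (3 : ℤ) • P = 0 := by
    have h : P + P + P = 0 := by rw [hP2]; exact neg_add_cancel P
    rw [show (3 : ℤ) = 1 + 1 + 1 by norm_num, add_zsmul, add_zsmul, one_zsmul]
    exact h
  have h3Q : (3 : ℤ) • Q = 0 := by
    have h : Q + Q + Q = 0 := by rw [hQ2]; exact neg_add_cancel Q
    rw [show (3 : ℤ) = 1 + 1 + 1 by norm_num, add_zsmul, add_zsmul, one_zsmul]
    exact h
  have hP0 : P ≠ 0 := WeierstrassCurve.Affine.Point.some_ne_zero hns1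
  have hQ0 : Q ≠ 0 := WeierstrassCurve.Affine.Point.some_ne_zero hns2
  have hQP : Q ≠ P := by
    intro h
    rw [hQdef, hPdef] at h
    injection h with hx hy
    exact hx12 hx.symm
  have hQP' : Q ≠ -P := by
    intro h
    rw [hQdef, hPdef, WeierstrassCurve.Affine.Point.neg_some] at h
    injection h with hx hy
    exact hx12 hx.symm
  exact aux_not_cyclic h3P h3Q hP0 hQ0 hQP hQP'
end
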